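/- arXiv:1404.2528 — 6 statements merged into one kernel-verified Lean document; each statement's English description precedes it below -/
import Mathlib

section
/- Let C be a small category and L = Ind(C) its free completion under directed colimits. If K is a category with directed colimits and the inclusion C → K is the restriction of a functor F : L → K preserving directed colimits that is the identity on C, and all morphisms of K are monomorphisms, then F is faithful. -/
open CategoryTheory Limits

universe u u₂

/-- The image under `Ind.inclusion` of the canonical colimit cocone maps presenting an
ind-object `Y` as a colimit of representables. -/
lemma ind_inclusion_map_sigma {C : Type u} [SmallCategory C] (Y : Ind C) (j : Y.presentation.I) :
    (Ind.inclusion C).map (colimit.ι (Y.presentation.F ⋙ Ind.yoneda) j ≫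
      (Ind.colimitPresentationCompYoneda Y).hom) =
      Ind.yonedaCompInclusion.hom.app (Y.presentation.F.obj j) ≫ Y.presentation.ι.app j := by
  simp only [Functor.map_comp, Ind.colimitPresentationCompYoneda,
    Functor.FullyFaithful.isoEquiv_symm_apply, Functor.FullyFaithful.preimageIso_hom,
    Functor.FullyFaithful.map_preimage, Trans.trans, Iso.trans_hom,
    ← Category.assoc]
  rw [ι_preservesColimitIso_hom, HasColimit.isoOfNatIso_ι_hom, Category.assoc,
    colimit.comp_coconePointUniqueUpToIso_hom]
  simp

/-- Let `C` be a small category and `L = Ind C` its free completion under directed colimits.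
If `K` is a category with directed colimits whose morphisms are all monomorphisms, and
`F : Ind C ⥤ K` preserves directed colimits and restricts along `Ind.yoneda` to the (fully
faithful) inclusion `ι : C ⥤ K` of `C` as a full subcategory of `K` (i.e. `F` is the identity
on `C`), then `F` is faithful. -/
theorem stmt2 (C : Type u) [SmallCategory C] (K : Type u₂) [Category.{u} K]
    (hdirK : ∀ (J : Type u) [Preorder J], Nonempty J → IsDirected J (· ≤ ·) →
      HasColimitsOfShape J K)
    (hmono : ∀ {A B : K} (f : A ⟶ B), Mono f)
    (ι : C ⥤ K) (hfull : ι.Full) (hfaith : ι.Faithful)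
    (F : Ind C ⥤ K)
    (hF : ∀ (J : Type u) [Preorder J], Nonempty J → IsDirected J (· ≤ ·) →
      Nonempty (PreservesColimitsOfShape J F))
    (he : Ind.yoneda ⋙ F ≅ ι) :
    F.Faithful := by
  -- `F` maps `Ind.yoneda.map w` to a conjugate of `ι.map w`.
  have hFy : ∀ {c d : C} (w : c ⟶ d),
      F.map (Ind.yoneda.map w) = he.hom.app c ≫ ι.map w ≫ he.inv.app d := by
    intro c d w
    rw [he.inv.naturality w, Iso.hom_inv_id_app_assoc]
    rfl
  -- Key step: `F` is injective on morphisms out of representables.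
  have key : ∀ (c : C) (Y : Ind C) (p q : Ind.yoneda.obj c ⟶ Y),
      F.map p = F.map q → p = q := by
    intro c Y p q hpq
    set P := Y.presentation with hP
    let σ : ∀ j : P.I, Ind.yoneda.obj (P.F.obj j) ⟶ Y := fun j =>
      colimit.ι (P.F ⋙ Ind.yoneda) j ≫ (Ind.colimitPresentationCompYoneda Y).hom
    -- every morphism `Ind.yoneda.obj c ⟶ Y` factors through the presentation
    have hB : ∀ (r : Ind.yoneda.obj c ⟶ Y), ∃ (j : P.I) (u : c ⟶ P.F.obj j),
        r = Ind.yoneda.map u ≫ σ j := by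
      intro r
      let ψ : yoneda.obj c ⟶ (Ind.inclusion C).obj Y :=
        Ind.yonedaCompInclusion.inv.app c ≫ (Ind.inclusion C).map r
      obtain ⟨j, y, hy⟩ := Types.jointly_surjective _
        (isColimitOfPreserves ((evaluation Cᵒᵖ (Type u)).obj (Opposite.op c)) P.coconeIsColimit)
        (yonedaEquiv ψ)
      refine ⟨j, y, ?_⟩
      have hψ : ψ = yoneda.map y ≫ P.ι.app j := by
        apply yonedaEquiv.injective
        conv_rhs => rw [yonedaEquiv_comp, yonedaEquiv_yoneda_map]
        simp at hy ⊢
        exact hy.symm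
      apply (Ind.inclusion C).map_injective
      rw [Functor.map_comp, ind_inclusion_map_sigma Y j, ← Category.assoc]
      have hnat : (Ind.inclusion C).map (Ind.yoneda.map y) ≫
          Ind.yonedaCompInclusion.hom.app (P.F.obj j) =
          Ind.yonedaCompInclusion.hom.app c ≫ yoneda.map y :=
        Ind.yonedaCompInclusion.hom.naturality y
      rw [hnat, Category.assoc, ← hψ]
      simp [ψ]
    obtain ⟨j, u, hu⟩ := hB p
    obtain ⟨k, v, hv⟩ := hB q
    -- push both factorizations to a common object of the filtered presentation
    let m := IsFiltered.max j k
    have hσ : ∀ {i : P.I} (α : i ⟶ m), σ i = Ind.yoneda.map (P.F.map α) ≫ σ m := by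
      intro i α
      dsimp only [σ]
      rw [← colimit.w (P.F ⋙ Ind.yoneda) α, Category.assoc]
      rfl
    let u' : c ⟶ P.F.obj m := u ≫ P.F.map (IsFiltered.leftToMax j k)
    let v' : c ⟶ P.F.obj m := v ≫ P.F.map (IsFiltered.rightToMax j k)
    have hp : p = Ind.yoneda.map u' ≫ σ m := by
      rw [hu, hσ (IsFiltered.leftToMax j k)]
      dsimp only [u']
      rw [Functor.map_comp, Category.assoc]
    have hq : q = Ind.yoneda.map v' ≫ σ m := by
      rw [hv, hσ (IsFiltered.rightToMax j k)]
      dsimp only [v']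
      rw [Functor.map_comp, Category.assoc]
    -- now compare in `K`, using that everything is a mono
    have e1 : F.map p = he.hom.app c ≫ ι.map u' ≫ he.inv.app (P.F.obj m) ≫ F.map (σ m) := by
      simp only [hp, Functor.map_comp, hFy, Category.assoc]
    have e2 : F.map q = he.hom.app c ≫ ι.map v' ≫ he.inv.app (P.F.obj m) ≫ F.map (σ m) := by
      simp only [hq, Functor.map_comp, hFy, Category.assoc]
    have hK := hpq
    rw [e1, e2] at hK
    have h1 := (cancel_epi (he.hom.app c)).1 hK
    have h1' : (ι.map u' ≫ he.inv.app (P.F.obj m)) ≫ F.map (σ m) =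
        (ι.map v' ≫ he.inv.app (P.F.obj m)) ≫ F.map (σ m) := by
      simpa only [Category.assoc] using h1
    haveI := hmono (F.map (σ m))
    have h2 : ι.map u' ≫ he.inv.app (P.F.obj m) = ι.map v' ≫ he.inv.app (P.F.obj m) :=
      (cancel_mono _).1 h1'
    have h3 : ι.map u' = ι.map v' := (cancel_mono (he.inv.app (P.F.obj m))).1 h2
    have h4 : u' = v' := hfaith.map_injective h3
    rw [hp, hq, h4]
  -- conclude faithfulness using the presentation of the source
  refine ⟨fun {X Y} f g h => ?_⟩
  have hcomp : (Ind.colimitPresentationCompYoneda X).hom ≫ f =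
      (Ind.colimitPresentationCompYoneda X).hom ≫ g := by
    apply colimit.hom_ext
    intro i
    rw [← Category.assoc, ← Category.assoc]
    exact key (X.presentation.F.obj i) Y _ _ (by simp only [Functor.map_comp, h])
  exact (cancel_epi (Ind.colimitPresentationCompYoneda X).hom).1 hcomp
end

section
/- Any abstract elementary class, regarded as a category with substructure embeddings as morphisms together with the underlying-set functor, is a coherent accessible category with concrete directed colimits. -/
open CategoryTheory Limits Opposite

universe u u₂ u₃

/-- A preorder is `κ`-directed if every subset of cardinality `< κ` has an upper bound. -/
def IsCardDirected (κ : Cardinal.{u}) (J : Type u) [Preorder J] : Prop :=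
  ∀ S : Set J, Cardinal.mk S < κ → ∃ b, ∀ a ∈ S, a ≤ b

/-- An object `K` is `κ`-presentable if its hom-functor preserves `κ`-directed colimits. -/
def IsPresentable (κ : Cardinal.{u}) {C : Type u₂} [Category.{u} C] (K : C) : Prop :=
  ∀ (J : Type u) [Preorder J], IsCardDirected κ J →
    Nonempty (PreservesColimitsOfShape J (coyoneda.obj (op K)))

/-- A category has (all) directed colimits. -/
def HasDirectedColimits (C : Type u₂) [Category.{u} C] : Prop :=
  ∀ (J : Type u) [Preorder J], IsCardDirected Cardinal.aleph0 J → HasColimitsOfShape J C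

/-- A presentation of `X` as a `κ`-directed colimit of objects from `S`. -/
structure DirectedColimitPresentation (κ : Cardinal.{u}) {C : Type u₂} [Category.{u} C]
    (S : Set C) (X : C) where
  J : Type u
  [inst : Preorder J]
  directed : IsCardDirected κ J
  D : J ⥤ C
  mem : ∀ j, D.obj j ∈ S
  cocone : Cocone D
  isColimit : IsColimit cocone
  iso : cocone.pt ≅ X

attribute [instance] DirectedColimitPresentation.inst

/-- `C` is a `κ`-accessible category. -/
structure IsAccessible (κ : Cardinal.{u}) (C : Type u₂) [Category.{u} C] : Prop where
  hasColimits : ∀ (J : Type u) [Preorder J], IsCardDirected κ J → HasColimitsOfShape J C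
  generators : ∃ S : Set C, (∀ A ∈ S, IsPresentable κ A) ∧
    ∀ X : C, Nonempty (DirectedColimitPresentation κ S X)

/-- A functor preserves (all) directed colimits. -/
def PreservesDirectedColimits {C : Type u₂} [Category.{u} C] {D : Type u₃} [Category.{u} D]
    (F : C ⥤ D) : Prop :=
  ∀ (J : Type u) [Preorder J], IsCardDirected Cardinal.aleph0 J →
    Nonempty (PreservesColimitsOfShape J F)

/-- Coherence of a concrete structure functor `U`. -/
def Coherent {C : Type u₂} [Category.{u} C] (U : C ⥤ Type u) : Prop :=
  ∀ {A B Z : C} (h : A ⟶ Z) (g : B ⟶ Z) (f : U.obj A → U.obj B),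
    U.map g ∘ f = U.map h → ∃ fbar : A ⟶ B, U.map fbar = f

/-- Equivalence of types `(f₀,a₀)` and `(f₁,a₁)` over `M`. -/
def TypesEquiv {C : Type u₂} [Category.{u} C] (U : C ⥤ Type u) {M N₀ N₁ : C}
    (f₀ : M ⟶ N₀) (a₀ : U.obj N₀) (f₁ : M ⟶ N₁) (a₁ : U.obj N₁) : Prop :=
  ∃ (N : C) (h₀ : N₀ ⟶ N) (h₁ : N₁ ⟶ N),
    f₀ ≫ h₀ = f₁ ≫ h₁ ∧ U.map h₀ a₀ = U.map h₁ a₁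

/-- The amalgamation property. -/
def AmalgamationProperty (C : Type u₂) [Category.{u} C] : Prop :=
  ∀ {K L M : C} (f : K ⟶ L) (g : K ⟶ M),
    ∃ (N : C) (u : L ⟶ N) (v : M ⟶ N), f ≫ u = g ≫ v

/-- The joint embedding property. -/
def JointEmbeddingProperty (C : Type u₂) [Category.{u} C] : Prop :=
  ∀ K L : C, ∃ (N : C) (_ : K ⟶ N) (_ : L ⟶ N), True

/-- `L` is `λ`-saturated: injective w.r.t. morphisms between `λ`-presentable objects. -/
def IsSaturated (κ : Cardinal.{u}) {C : Type u₂} [Category.{u} C] (L : C) : Prop :=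
  ∀ {A B : C}, IsPresentable κ A → IsPresentable κ B →
    ∀ (f : A ⟶ L) (g : A ⟶ B), ∃ h : B ⟶ L, g ≫ h = f

/-- `K` has size `c`: its presentability rank is the successor cardinal `c⁺`. -/
def SizeIs (c : Cardinal.{u}) {C : Type u₂} [Category.{u} C] (K : C) : Prop :=
  IsPresentable (Order.succ c) K ∧ ∀ κ, Cardinal.IsRegular κ → κ ≤ c → ¬ IsPresentable κ K

open FirstOrder FirstOrder.Language

/-- An abstract elementary class in a (finitary) signature `L`: a class of `L`-structures
together with a class of strong substructure embeddings, satisfying the AEC axioms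
(closure under isomorphism, coherence, Tarski–Vaught chain axioms and Löwenheim–Skolem). -/
structure AEC (L : FirstOrder.Language.{u, u}) where
  /-- the class of structures -/
  Obj : ∀ (M : Type u) [L.Structure M], Prop
  /-- the class of strong embeddings -/
  Strong : ∀ (M N : Type u) [L.Structure M] [L.Structure N], (M ↪[L] N) → Prop
  refl_strong : ∀ (M : Type u) [L.Structure M], Obj M → Strong M M (Embedding.refl L M)
  comp_strong : ∀ {M N P : Type u} [L.Structure M] [L.Structure N] [L.Structure P]
      (f : M ↪[L] N) (g : N ↪[L] P), Strong M N f → Strong N P g → Strong M P (g.comp f)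
  strong_src : ∀ {M N : Type u} [L.Structure M] [L.Structure N] (f : M ↪[L] N),
      Strong M N f → Obj M ∧ Obj N
  iso_closed : ∀ {M N : Type u} [L.Structure M] [L.Structure N] (e : M ≃[L] N),
      Obj M → Obj N ∧ Strong M N e.toEmbedding
  coherence : ∀ {M N P : Type u} [L.Structure M] [L.Structure N] [L.Structure P]
      (f : M ↪[L] N) (g : N ↪[L] P), Strong M P (g.comp f) → Strong N P g → Strong M N f
  chain_mem : ∀ (ι : Type u) [Preorder ι] [IsDirected ι (· ≤ ·)] [Nonempty ι]
      (G : ι → Type u) [∀ i, L.Structure (G i)] (f : ∀ i j, i ≤ j → G i ↪[L] G j)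
      [DirectedSystem G fun i j h => f i j h],
      (∀ i, Obj (G i)) → (∀ i j (h : i ≤ j), Strong _ _ (f i j h)) →
      Obj (FirstOrder.Language.DirectLimit G f) ∧ ∀ i, Strong _ _ (FirstOrder.Language.DirectLimit.of L ι G f i)
  chain_smooth : ∀ (ι : Type u) [Preorder ι] [IsDirected ι (· ≤ ·)] [Nonempty ι]
      (G : ι → Type u) [∀ i, L.Structure (G i)] (f : ∀ i j, i ≤ j → G i ↪[L] G j)
      [DirectedSystem G fun i j h => f i j h] (N : Type u) [L.Structure N],
      (∀ i, Obj (G i)) → (∀ i j (h : i ≤ j), Strong _ _ (f i j h)) →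
      ∀ (g : FirstOrder.Language.DirectLimit G f ↪[L] N),
        (∀ i, Strong _ _ (g.comp (FirstOrder.Language.DirectLimit.of L ι G f i))) → Strong _ _ g
  lsNum : Cardinal.{u}
  ls : ∀ (M : Type u) [L.Structure M], Obj M → ∀ S : Set M,
      ∃ N : L.Substructure M, S ⊆ (N : Set M) ∧ Obj N ∧ Strong N M N.subtype ∧
        Cardinal.mk N ≤ lsNum + Cardinal.mk S

variable {L : FirstOrder.Language.{u, u}}

/-- The objects of the category associated to an AEC. -/
structure AECCat (A : AEC L) where
  carrier : Type u
  [str : L.Structure carrier]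
  mem : A.Obj carrier

attribute [instance] AECCat.str

/-- The category of an AEC: morphisms are the strong embeddings. -/
instance AECCat.category (A : AEC L) : Category.{u} (AECCat A) where
  Hom M N := {f : M.carrier ↪[L] N.carrier // A.Strong _ _ f}
  id M := ⟨Embedding.refl L M.carrier, A.refl_strong _ M.mem⟩
  comp f g := ⟨g.1.comp f.1, A.comp_strong _ _ f.2 g.2⟩
  id_comp _ := Subtype.ext (Embedding.ext fun _ => rfl)
  comp_id _ := Subtype.ext (Embedding.ext fun _ => rfl)
  assoc _ _ _ := Subtype.ext (Embedding.ext fun _ => rfl)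

/-- The underlying-set functor of an AEC. -/
def AECforget (A : AEC L) : AECCat A ⥤ Type u where
  obj M := M.carrier
  map f := TypeCat.ofHom f.1
  map_id _ := rfl
  map_comp _ _ := rfl

section Helpers

variable {L : FirstOrder.Language.{u, u}} {A : AEC L}

lemma IsCardDirected.mono {κ κ' : Cardinal.{u}} {J : Type u} [Preorder J]
    (h : IsCardDirected κ J) (hle : κ' ≤ κ) : IsCardDirected κ' J :=
  fun S hS => h S (hS.trans_le hle)

lemma IsCardDirected.nonempty {J : Type u} [Preorder J]
    (h : IsCardDirected Cardinal.aleph0 J) : Nonempty J := by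
  obtain ⟨b, -⟩ := h ∅ (by simpa using Cardinal.aleph0_pos)
  exact ⟨b⟩

lemma IsCardDirected.isDirected {J : Type u} [Preorder J]
    (h : IsCardDirected Cardinal.aleph0 J) : IsDirected J (· ≤ ·) := by
  constructor
  intro a b
  obtain ⟨c, hc⟩ := h {a, b} (((Set.finite_singleton b).insert a).lt_aleph0)
  exact ⟨c, hc a (by simp), hc b (by simp)⟩

end Helpers
namespace AECColim

variable {L : FirstOrder.Language.{u, u}} {A : AEC L}
variable {J : Type u} [Preorder J] [IsDirected J (· ≤ ·)] [Nonempty J] (D : J ⥤ AECCat A)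

/-- The underlying directed system of types. -/
abbrev G (j : J) : Type u := (D.obj j).carrier

/-- The transition embeddings. -/
def f (i j : J) (h : i ≤ j) : G D i ↪[L] G D j := (D.map h.hom).1

instance : DirectedSystem (G D) (fun i j h => f D i j h) where
  map_self i x := by
    have : (le_refl i).hom = 𝟙 i := rfl
    simp only [f, this, D.map_id]
    rfl
  map_map {k j i} hij hjk x := by
    have : (hij.trans hjk).hom = hij.hom ≫ hjk.hom := rfl
    simp only [f, this, D.map_comp]
    rfl

lemma chain : A.Obj (Language.DirectLimit (G D) (f D)) ∧
    ∀ i, A.Strong _ _ (Language.DirectLimit.of L J (G D) (f D) i) :=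
  A.chain_mem J (G D) (f D) (fun j => (D.obj j).mem) (fun i j h => (D.map h.hom).2)

/-- The colimit object. -/
noncomputable def pt : AECCat A := ⟨Language.DirectLimit (G D) (f D), (chain D).1⟩

/-- The canonical maps into the colimit. -/
noncomputable def ofHom (j : J) : D.obj j ⟶ pt D := ⟨Language.DirectLimit.of L J (G D) (f D) j, (chain D).2 j⟩

/-- The colimit cocone. -/
noncomputable def cocone : Cocone D where
  pt := pt D
  ι :=
    { app := ofHom D
      naturality := fun i j h => by
        refine Subtype.ext (Embedding.ext fun x => ?_)
        have hh : h = (leOfHom h).hom := (homOfLE_leOfHom h).symm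
        show Language.DirectLimit.of L J (G D) (f D) j ((D.map h).1 x) = _
        rw [hh]
        exact (Language.DirectLimit.of_f (hij := leOfHom h)).trans rfl }
lemma w_apply (s : Cocone D) {i j : J} (hij : i ≤ j) (x : G D i) :
    (s.ι.app j).1 (f D i j hij x) = (s.ι.app i).1 x := by
  have := congrArg Subtype.val (s.w hij.hom)
  exact DFunLike.congr_fun this x

/-- The descent map as an embedding. -/
noncomputable def descEmb (s : Cocone D) : Language.DirectLimit (G D) (f D) ↪[L] s.pt.carrier :=
  Language.DirectLimit.lift L J (G D) (f D) (fun i => (s.ι.app i).1) (fun i j hij x => w_apply D s hij x)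

lemma descEmb_of (s : Cocone D) (i : J) (x : G D i) :
    descEmb D s (Language.DirectLimit.of L J (G D) (f D) i x) = (s.ι.app i).1 x := by
  unfold descEmb; exact Language.DirectLimit.lift_of _ _ x

lemma descEmb_strong (s : Cocone D) : A.Strong _ _ (descEmb D s) := by
  apply A.chain_smooth J (G D) (f D) _ (fun j => (D.obj j).mem)
    (fun i j h => (D.map h.hom).2)
  intro i
  have : (descEmb D s).comp (Language.DirectLimit.of L J (G D) (f D) i) = (s.ι.app i).1 :=
    Embedding.ext fun x => descEmb_of D s i x
  rw [this]
  exact (s.ι.app i).2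

/-- The colimit cocone is a colimit. -/
noncomputable def isColimit : IsColimit (cocone D) where
  desc s := ⟨descEmb D s, descEmb_strong D s⟩
  fac s j := Subtype.ext (Embedding.ext fun x => descEmb_of D s j x)
  uniq s m hm := by
    refine Subtype.ext (Embedding.ext fun z => ?_)
    refine Language.DirectLimit.inductionOn z fun i x => ?_
    have h1 : m.1 (Language.DirectLimit.of L J (G D) (f D) i x) = (s.ι.app i).1 x :=
      DFunLike.congr_fun (congrArg Subtype.val (hm i)) x
    have h2 : (descEmb D s) (Language.DirectLimit.of L J (G D) (f D) i x) = (s.ι.app i).1 x :=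
      descEmb_of D s i x
    exact h1.trans h2.symm

/-- The forgetful functor maps the colimit cocone to a colimit cocone in `Type`. -/
noncomputable def isColimitForget : IsColimit ((AECforget A).mapCocone (cocone D)) := by
  apply Types.FilteredColimit.isColimitOf
  · intro z
    obtain ⟨i, x, h⟩ := Language.DirectLimit.exists_of (f := f D) z
    exact ⟨i, x, h.symm⟩
  · intro i j xi xj h
    obtain ⟨k, hik, hjk⟩ := directed_of (· ≤ ·) i j
    refine ⟨k, hik.hom, hjk.hom, ?_⟩
    apply (Language.DirectLimit.of L J (G D) (f D) k).injective
    show Language.DirectLimit.of L J (G D) (f D) k (f D i k hik xi)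
      = Language.DirectLimit.of L J (G D) (f D) k (f D j k hjk xj)
    refine (Language.DirectLimit.of_f (hij := hik)).trans (Eq.trans ?_ (Language.DirectLimit.of_f (hij := hjk)).symm)
    exact h

end AECColim
section Main

variable {L : FirstOrder.Language.{u, u}} {A : AEC L}

theorem AEC.coherent (A : AEC L) : Coherent (AECforget A) := by
  intro M N Z h g fn0 hcomm
  let fn : M.carrier → N.carrier := fn0
  have hgf : ∀ a, g.1 (fn a) = h.1 a := fun a => congrFun hcomm a
  have hinj : Function.Injective fn := by
    intro a b hab
    apply h.1.injective
    rw [← hgf, ← hgf, hab]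
  let femb : M.carrier ↪[L] N.carrier :=
    { toFun := fn
      inj' := hinj
      map_fun' := by
        intro n F x
        apply g.1.injective
        show g.1 (fn _) = g.1 (Structure.funMap F _)
        rw [hgf, h.1.map_fun, g.1.map_fun]
        congr 1
        funext i
        exact (hgf (x i)).symm
      map_rel' := by
        intro n r x
        have e1 : g.1.toFun ∘ (fn ∘ x) = h.1.toFun ∘ x := by
          funext i; exact hgf (x i)
        calc Structure.RelMap r (fn ∘ x)
            ↔ Structure.RelMap r (g.1.toFun ∘ (fn ∘ x)) := (g.1.map_rel' r _).symm
          _ ↔ Structure.RelMap r (h.1.toFun ∘ x) := by rw [e1]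
          _ ↔ Structure.RelMap r x := h.1.map_rel' r x }
  refine ⟨⟨femb, ?_⟩, rfl⟩
  apply A.coherence femb g.1 _ g.2
  have : g.1.comp femb = h.1 := Embedding.ext fun a => hgf a
  rw [this]
  exact h.2

theorem AEC.hasDirectedColimits (A : AEC L) : HasDirectedColimits (AECCat A) := by
  intro J _ hJ
  haveI : Nonempty J := hJ.nonempty
  haveI : IsDirected J (· ≤ ·) := hJ.isDirected
  exact ⟨fun {D} => HasColimit.mk ⟨AECColim.cocone D, AECColim.isColimit D⟩⟩

theorem AEC.preservesDirected (A : AEC L) : PreservesDirectedColimits (AECforget A) := by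
  intro J _ hJ
  haveI : Nonempty J := hJ.nonempty
  haveI : IsDirected J (· ≤ ·) := hJ.isDirected
  exact ⟨⟨fun {D} => preservesColimit_of_preserves_colimit_cocone
    (AECColim.isColimit D) (AECColim.isColimitForget D)⟩⟩

end Main
section Present

variable {L : FirstOrder.Language.{u, u}} {A : AEC L}

theorem presentable_of_small (A : AEC L) (μ : Cardinal.{u}) (hμ : Cardinal.aleph0 ≤ μ)
    (M : AECCat A) (hM : Cardinal.mk M.carrier ≤ μ) :
    IsPresentable (Order.succ μ) M := by
  intro J _ hJ
  have hJ0 : IsCardDirected Cardinal.aleph0 J := hJ.mono (hμ.trans (Order.le_succ μ))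
  haveI : Nonempty J := hJ0.nonempty
  haveI : IsDirected J (· ≤ ·) := hJ0.isDirected
  constructor
  refine ⟨fun {D} => ?_⟩
  apply preservesColimit_of_preserves_colimit_cocone (AECColim.isColimit D)
  apply Types.FilteredColimit.isColimitOf
  · intro u
    choose idx xel hux using fun a : M.carrier =>
      Language.DirectLimit.exists_of (f := AECColim.f D) (u.1 a)
    obtain ⟨k, hk⟩ := hJ (Set.range idx)
      (lt_of_le_of_lt (Cardinal.mk_range_le.trans hM) (Order.lt_succ μ))
    let v : M.carrier → AECColim.G D k :=
      fun a => AECColim.f D (idx a) k (hk _ ⟨a, rfl⟩) (xel a)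
    have hv : ∀ a, (AECColim.ofHom D k).1 (v a) = u.1 a := by
      intro a
      show Language.DirectLimit.of L J (AECColim.G D) (AECColim.f D) k (AECColim.f D (idx a) k _ (xel a)) = _
      rw [Language.DirectLimit.of_f]
      exact hux a
    obtain ⟨vbar, hvbar⟩ := A.coherent u (AECColim.ofHom D k) v (funext hv)
    refine ⟨k, vbar, ?_⟩
    refine Subtype.ext (Embedding.ext fun a => ?_)
    show u.1 a = (AECColim.ofHom D k).1 (vbar.1 a)
    have hv2 : (vbar.1 : M.carrier → AECColim.G D k) a = v a := congrFun hvbar a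
    rw [hv2]
    exact (hv a).symm
  · intro i j ui uj hij'
    obtain ⟨k, hik, hjk⟩ := directed_of (· ≤ ·) i j
    refine ⟨k, hik.hom, hjk.hom, ?_⟩
    refine Subtype.ext (Embedding.ext fun a => ?_)
    apply (Language.DirectLimit.of L J (AECColim.G D) (AECColim.f D) k).injective
    have h1 : (AECColim.ofHom D i).1 (ui.1 a) = (AECColim.ofHom D j).1 (uj.1 a) :=
      DFunLike.congr_fun (congrArg Subtype.val hij') a
    show Language.DirectLimit.of L J (AECColim.G D) (AECColim.f D) k (AECColim.f D i k hik (ui.1 a))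
      = Language.DirectLimit.of L J (AECColim.G D) (AECColim.f D) k (AECColim.f D j k hjk (uj.1 a))
    rw [Language.DirectLimit.of_f, Language.DirectLimit.of_f]
    exact h1

end Present
section Access

variable {L : FirstOrder.Language.{u, u}}

theorem AEC.isAccessible (A : AEC L) :
    ∃ κ : Cardinal.{u}, κ.IsRegular ∧ IsAccessible κ (AECCat A) := by
  set μ : Cardinal.{u} := A.lsNum + Cardinal.aleph0 with hμdef
  have hμ : Cardinal.aleph0 ≤ μ := le_add_self
  have hls : A.lsNum ≤ μ := le_self_add
  refine ⟨Order.succ μ, Cardinal.isRegular_succ hμ, ?_, ?_⟩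
  · -- hasColimits
    intro J _ hJ
    exact A.hasDirectedColimits J (hJ.mono (hμ.trans (Order.le_succ μ)))
  · refine ⟨{X : AECCat A | Cardinal.mk X.carrier ≤ μ}, fun X hX =>
      presentable_of_small A μ hμ X hX, fun X => ?_⟩
    -- the poset of small strong substructures of X
    let P := {N : L.Substructure X.carrier //
      A.Obj N ∧ A.Strong N X.carrier N.subtype ∧ Cardinal.mk N ≤ μ}
    have hdir : IsCardDirected (Order.succ μ) P := by
      intro S hS
      have hSle : Cardinal.mk S ≤ μ := Order.lt_succ_iff.mp hS
      have hT : Cardinal.mk (⋃ (N : S), ((N : P).1 : Set X.carrier)) ≤ μ := by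
        refine (Cardinal.mk_iUnion_le_sum_mk.trans ?_)
        calc (Cardinal.sum fun N : S => Cardinal.mk ((N : P).1 : Set X.carrier))
            ≤ Cardinal.sum fun _ : S => μ :=
              Cardinal.sum_le_sum _ _ (fun N => (N : P).2.2.2)
          _ = Cardinal.mk S * μ := Cardinal.sum_const' _ _
          _ ≤ μ * μ := mul_le_mul' hSle le_rfl
          _ = μ := Cardinal.mul_eq_self hμ
      obtain ⟨N₀, hTN₀, hObj, hStrong, hcard⟩ :=
        A.ls X.carrier X.mem (⋃ (N : S), ((N : P).1 : Set X.carrier))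
      have hcard' : Cardinal.mk N₀ ≤ μ := by
        refine hcard.trans ?_
        calc A.lsNum + Cardinal.mk (⋃ (N : S), ((N : P).1 : Set X.carrier))
            ≤ μ + μ := add_le_add hls hT
          _ = μ := Cardinal.add_eq_self hμ
      refine ⟨⟨N₀, hObj, hStrong, hcard'⟩, fun N hN => ?_⟩
      intro x hx
      exact hTN₀ (Set.mem_iUnion.mpr ⟨⟨N, hN⟩, hx⟩)
    have hdir0 : IsCardDirected Cardinal.aleph0 P := hdir.mono (hμ.trans (Order.le_succ μ))
    haveI : Nonempty P := hdir0.nonempty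
    haveI : IsDirected P (· ≤ ·) := hdir0.isDirected
    have strong_incl : ∀ (N N' : P) (h : N.1 ≤ N'.1),
        A.Strong _ _ (Substructure.inclusion h) := by
      intro N N' h
      apply A.coherence (Substructure.inclusion h) N'.1.subtype _ N'.2.2.1
      rw [show N'.1.subtype.comp (Substructure.inclusion h) = N.1.subtype from rfl]
      exact N.2.2.1
    let D : P ⥤ AECCat A :=
      { obj := fun N => ⟨N.1, N.2.1⟩
        map := fun {N N'} h => ⟨Substructure.inclusion (leOfHom h), strong_incl N N' (leOfHom h)⟩
        map_id := fun N => Subtype.ext (Embedding.ext fun x => rfl)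
        map_comp := fun _ _ => Subtype.ext (Embedding.ext fun x => rfl) }
    -- the cocone to X
    let toX : Cocone D :=
      { pt := X
        ι :=
          { app := fun N => ⟨N.1.subtype, N.2.2.1⟩
            naturality := fun N N' h => Subtype.ext (Embedding.ext fun x => rfl) } }
    let φ : (AECColim.cocone D).pt ⟶ X := (AECColim.isColimit D).desc toX
    have hsurj : Function.Surjective φ.1 := by
      intro x
      obtain ⟨N, hxN, hObj, hStrong, hcard⟩ := A.ls X.carrier X.mem {x}
      have hcard' : Cardinal.mk N ≤ μ := by
        refine hcard.trans (add_le_add le_rfl ?_)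
        rw [Cardinal.mk_singleton]
        exact Cardinal.one_lt_aleph0.le
      have hx : x ∈ N := hxN rfl
      refine ⟨(AECColim.ofHom D ⟨N, hObj, hStrong, hcard'⟩).1 ⟨x, hx⟩, ?_⟩
      have := DFunLike.congr_fun
        (congrArg Subtype.val ((AECColim.isColimit D).fac toX ⟨N, hObj, hStrong, hcard'⟩))
        (⟨x, hx⟩ : N)
      exact this
    have hbij : Function.Bijective φ.1 := ⟨φ.1.injective, hsurj⟩
    let e : (AECColim.cocone D).pt.carrier ≃[L] X.carrier :=
      { toEquiv := Equiv.ofBijective _ hbij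
        map_fun' := fun F x => φ.1.map_fun' F x
        map_rel' := fun r x => φ.1.map_rel' r x }
    have hψ := A.iso_closed e.symm X.mem
    refine ⟨⟨P, hdir, D, fun N => N.2.2.2, AECColim.cocone D, AECColim.isColimit D,
      { hom := φ
        inv := ⟨e.symm.toEmbedding, hψ.2⟩
        hom_inv_id := Subtype.ext (Embedding.ext fun z => e.toEquiv.symm_apply_apply z)
        inv_hom_id := Subtype.ext (Embedding.ext fun z => e.toEquiv.apply_symm_apply z) }⟩⟩

end Access
/-- Any abstract elementary class, regarded as a category with strong substructure embeddings
as morphisms together with the underlying-set functor, is a coherent accessible category with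
concrete directed colimits. -/
theorem stmt5 (L : FirstOrder.Language.{u, u}) (A : AEC L) :
    (AECforget A).Faithful ∧
    PreservesDirectedColimits (AECforget A) ∧
    Coherent (AECforget A) ∧
    HasDirectedColimits (AECCat A) ∧
    ∃ κ : Cardinal.{u}, κ.IsRegular ∧ IsAccessible κ (AECCat A) :=
  ⟨{ map_injective := fun h => Subtype.ext (Embedding.ext fun x => ConcreteCategory.congr_hom h x) },
    A.preservesDirected, A.coherent, A.hasDirectedColimits, A.isAccessible⟩
end

section
/- If the faithful directed-colimit-preserving functor U : K → Set of an accessible category with concrete directed colimits is coherent, then the pullback category K₀ of K along the inclusion Emb(Set) → Set (sets with injective maps) is again coherent, and its morphisms are monomorphisms preserved by the induced functor U₀. -/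
open CategoryTheory Limits Opposite

universe u u₂ u₃

/-- The pullback `K₀` of `U : K ⥤ Set` along the inclusion `Emb(Set) → Set`: same objects,
but only the morphisms whose image under `U` is injective. -/
def EmbPullback {C : Type u₂} [Category.{u} C] (U : C ⥤ Type u) := C

instance EmbPullback.category {C : Type u₂} [Category.{u} C] (U : C ⥤ Type u) :
    Category.{u} (EmbPullback U) where
  Hom A B := {f : (show C from A) ⟶ (show C from B) // Function.Injective (U.map f)}
  id A := ⟨𝟙 (show C from A), fun x y h => (FunctorToTypes.map_id_apply U x).symm.trans (h.trans (FunctorToTypes.map_id_apply U y))⟩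
  comp f g := ⟨f.1 ≫ g.1, by rw [U.map_comp]; exact fun x y h => f.2 (g.2 h)⟩
  id_comp f := Subtype.ext (Category.id_comp (obj := C) _)
  comp_id f := Subtype.ext (Category.comp_id (obj := C) _)
  assoc f g h := Subtype.ext (Category.assoc (obj := C) _ _ _)

/-- The induced concrete functor `U₀` on the pullback category. -/
def EmbPullback.U₀ {C : Type u₂} [Category.{u} C] (U : C ⥤ Type u) :
    EmbPullback U ⥤ Type u where
  obj A := U.obj (show C from A)
  map f := U.map f.1
  map_id _ := U.map_id _
  map_comp _ _ := U.map_comp _ _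

/-- If `U` is coherent, then the pullback category `K₀` of `K` along `Emb(Set) → Set` is again
coherent, and all its morphisms are monomorphisms preserved by `U₀`. -/
theorem stmt6 (C : Type u₂) [Category.{u} C] (κ : Cardinal.{u}) (hκ : κ.IsRegular)
    (hacc : IsAccessible κ C) (hdir : HasDirectedColimits C)
    (U : C ⥤ Type u) (hfaith : U.Faithful) (hU : PreservesDirectedColimits U)
    (hcoh : Coherent U) :
    Coherent (EmbPullback.U₀ U) ∧
    ∀ {A B : EmbPullback U} (f : A ⟶ B),
      Mono f ∧ Function.Injective ((EmbPullback.U₀ U).map f) := by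
  constructor
  · intro A B Z h g f hfg
    obtain ⟨fbar, hfbar⟩ := hcoh h.1 g.1 f hfg
    refine ⟨⟨fbar, ?_⟩, hfbar⟩
    intro x y hxy
    have : (U.map g.1 ∘ f) x = (U.map g.1 ∘ f) y := by
      rw [← hfbar]; exact congrArg (fun t => U.map g.1 t) hxy
    exact h.2 (((congrFun hfg x).symm.trans this).trans (congrFun hfg y))
  · intro A B f
    refine ⟨⟨fun {X} g₁ g₂ hgg => ?_⟩, f.2⟩
    apply Subtype.ext
    apply hfaith.map_injective
    ext x
    have := congrArg (fun t => U.map t.1 x) hgg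
    change U.map (g₁.1 ≫ f.1) x = U.map (g₂.1 ≫ f.1) x at this
    rw [U.map_comp, U.map_comp] at this
    exact f.2 this
end

section
/- Let K be an accessible category with directed colimits. A λ⁺-directed colimit of λ-saturated objects is λ-saturated. -/
open CategoryTheory Limits Opposite

universe u u₂ u₃

/-- In an accessible category with directed colimits, a `λ⁺`-directed colimit of `λ`-saturated
objects is `λ`-saturated. -/
theorem stmt11 (C : Type u₂) [Category.{u} C] (κ : Cardinal.{u}) (hκ : κ.IsRegular)
    (hacc : IsAccessible κ C) (hdir : HasDirectedColimits C)
    (lam : Cardinal.{u}) (hlam : lam.IsRegular)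
    (J : Type u) [Preorder J] (hJ : IsCardDirected (Order.succ lam) J)
    (D : J ⥤ C) (hsat : ∀ j, IsSaturated lam (D.obj j))
    (c : Cocone D) (hc : IsColimit c) :
    IsSaturated lam c.pt := by
  intro A B hA hB f g
  -- J is λ⁺-directed, hence λ-directed
  have hJlam : IsCardDirected lam J := fun S hS =>
    hJ S (hS.trans_le (Order.le_succ lam))
  obtain ⟨hpres⟩ := hA J hJlam
  -- factor f through some cocone component
  have hcol : IsColimit ((coyoneda.obj (op A)).mapCocone c) :=
    isColimitOfPreserves (coyoneda.obj (op A)) hc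
  obtain ⟨j, f', hf'⟩ := Types.jointly_surjective _ hcol f
  -- f' : A ⟶ D.obj j with f' ≫ c.ι.app j = f
  obtain ⟨h, hh⟩ := hsat j hA hB f' g
  exact ⟨h ≫ c.ι.app j, by rw [← Category.assoc, hh]; exact hf'⟩
end

section
/- Let K be an accessible category with directed colimits. If K is λ-accessible then K is μ-accessible for every regular cardinal μ ≥ λ. -/
open CategoryTheory Limits Opposite

universe u u₂ u₃

namespace Aux14

variable {J : Type u} [Preorder J]

lemma mono {κ κ' : Cardinal.{u}} (h : κ' ≤ κ) (hJ : IsCardDirected κ J) :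
    IsCardDirected κ' J := fun S hS => hJ S (hS.trans_le h)

lemma nonempty {κ : Cardinal.{u}} (hκ : Cardinal.aleph0 ≤ κ) (hJ : IsCardDirected κ J) :
    Nonempty J := by
  obtain ⟨b, -⟩ := hJ ∅ (by simpa using Cardinal.aleph0_pos.trans_le hκ)
  exact ⟨b⟩

lemma directed {κ : Cardinal.{u}} (hκ : Cardinal.aleph0 ≤ κ) (hJ : IsCardDirected κ J) :
    IsDirected J (· ≤ ·) := by
  constructor
  intro a b
  obtain ⟨c, hc⟩ := hJ {a, b} (lt_of_lt_of_le ((Set.toFinite {a,b}).lt_aleph0) hκ)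
  exact ⟨c, hc a (by simp), hc b (by simp)⟩

/-- bound a small family plus one extra element -/
lemma bound {μ : Cardinal.{u}} (hμ : μ.IsRegular) (hJ : IsCardDirected μ J)
    {ι : Type u} (f : ι → J) (hι : Cardinal.mk ι < μ) (extra : J) :
    ∃ b, extra ≤ b ∧ ∀ i, f i ≤ b := by
  have hcard : Cardinal.mk ↥(insert extra (Set.range f)) < μ := by
    refine lt_of_le_of_lt Cardinal.mk_insert_le ?_
    exact Cardinal.add_lt_of_lt hμ.aleph0_le (Cardinal.mk_range_le.trans_lt hι)
      (lt_of_lt_of_le Cardinal.one_lt_aleph0 hμ.aleph0_le)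
  obtain ⟨b, hb⟩ := hJ (insert extra (Set.range f)) hcard
  exact ⟨b, hb extra (by simp), fun i => hb (f i) (by simp)⟩

/-- closure of a small set under directedness, staying small -/
lemma closure {lam μ : Cardinal.{u}} (hlam : lam.IsRegular) (hμ : μ.IsRegular)
    (hle : lam ≤ μ) (hJ : IsCardDirected lam J) (A : Set J) (hA : Cardinal.mk ↥A < μ) :
    ∃ M : Set J, A ⊆ M ∧ IsCardDirected Cardinal.aleph0 M ∧ Cardinal.mk M < μ := by
  by_cases hfin : Cardinal.mk ↥A < Cardinal.aleph0
  · -- finite case: a single upper bound tops everything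
    obtain ⟨b, hb⟩ := hJ A (hfin.trans_le hlam.aleph0_le)
    refine ⟨insert b A, Set.subset_insert _ _, ?_, ?_⟩
    · intro S _
      refine ⟨⟨b, Set.mem_insert _ _⟩, ?_⟩
      rintro ⟨a, (rfl | ha)⟩ _
      · exact le_refl _
      · exact hb a ha
    · exact lt_of_le_of_lt Cardinal.mk_insert_le
        (Cardinal.add_lt_of_lt hμ.aleph0_le (hfin.trans_le hμ.aleph0_le)
          (lt_of_lt_of_le Cardinal.one_lt_aleph0 hμ.aleph0_le))
  · push_neg at hfin
    have hinfA : Infinite A := by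
      rw [Cardinal.infinite_iff]; exact hfin
    -- choice of upper bounds of finite sets
    have hub : ∀ F : Finset J, ∃ b, ∀ a ∈ F, a ≤ b := by
      intro F
      obtain ⟨b, hb⟩ := hJ (F : Set J) (lt_of_lt_of_le (F.finite_toSet.lt_aleph0) hlam.aleph0_le)
      exact ⟨b, fun a ha => hb a (by simpa using ha)⟩
    choose u hu using hub
    -- iterate
    let Aseq : ℕ → Set J := fun n => Nat.rec A (fun _ An => An ∪ u '' {F : Finset J | ↑F ⊆ An}) n
    have hsub : ∀ n, Aseq n ⊆ Aseq (n + 1) := fun n => Set.subset_union_left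
    have hmono : Monotone Aseq := monotone_nat_of_le_succ hsub
    have hcard : ∀ n, Cardinal.mk ↥(Aseq n) ≤ Cardinal.mk ↥A := by
      intro n
      induction n with
      | zero => exact le_refl _
      | succ n ih =>
        have hinf : Cardinal.aleph0 ≤ Cardinal.mk ↥(Aseq n) := by
          exact hfin.trans (Cardinal.mk_le_mk_of_subset (hmono (Nat.zero_le n)))
        haveI hinfn : Infinite ↥(Aseq n) := Cardinal.infinite_iff.mpr hinf
        have h1 : Cardinal.mk ↥{F : Finset J | ↑F ⊆ Aseq n} ≤ Cardinal.mk ↥(Aseq n) := by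
          have hinj : Function.Injective (fun F : {F : Finset J | ↑F ⊆ Aseq n} =>
              (F : Finset J).preimage (Subtype.val : ↥(Aseq n) → J)
                (Subtype.val_injective.injOn)) := by
            rintro ⟨F, hF⟩ ⟨G, hG⟩ h
            replace h : F.preimage (Subtype.val : ↥(Aseq n) → J) (Subtype.val_injective.injOn) =
                G.preimage (Subtype.val : ↥(Aseq n) → J) (Subtype.val_injective.injOn) := h
            simp only [Subtype.mk.injEq]
            ext a
            constructor
            · intro haF
              have : (⟨a, hF haF⟩ : ↥(Aseq n)) ∈
                  F.preimage (Subtype.val : ↥(Aseq n) → J) (Subtype.val_injective.injOn) := by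
                rw [Finset.mem_preimage]; exact haF
              rw [h] at this
              rw [Finset.mem_preimage] at this
              exact this
            · intro haG
              have : (⟨a, hG haG⟩ : ↥(Aseq n)) ∈
                  G.preimage (Subtype.val : ↥(Aseq n) → J) (Subtype.val_injective.injOn) := by
                rw [Finset.mem_preimage]; exact haG
              rw [← h] at this
              rw [Finset.mem_preimage] at this
              exact this
          calc Cardinal.mk ↥{F : Finset J | ↑F ⊆ Aseq n}
              ≤ Cardinal.mk (Finset ↥(Aseq n)) := Cardinal.mk_le_of_injective hinj
            _ = Cardinal.mk ↥(Aseq n) := by exact Cardinal.mk_finset_of_infinite ↥(Aseq n)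
        calc Cardinal.mk ↥(Aseq (n + 1))
            ≤ Cardinal.mk ↥(Aseq n) + Cardinal.mk ↥(u '' {F : Finset J | ↑F ⊆ Aseq n}) :=
              Cardinal.mk_union_le _ _
          _ ≤ Cardinal.mk ↥(Aseq n) + Cardinal.mk ↥{F : Finset J | ↑F ⊆ Aseq n} := by
              gcongr; exact Cardinal.mk_image_le
          _ ≤ Cardinal.mk ↥A + Cardinal.mk ↥A := add_le_add ih (h1.trans ih)
          _ = Cardinal.mk ↥A := Cardinal.add_eq_self hfin
    refine ⟨⋃ n, Aseq n, Set.subset_iUnion Aseq 0, ?_, ?_⟩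
    · -- directed
      intro S hS
      have hSfin : S.Finite :=
        Set.finite_coe_iff.mp (Cardinal.lt_aleph0_iff_finite.mp hS)
      have : ∀ x : S, ∃ n, (x.val : J) ∈ Aseq n := by
        intro x
        exact Set.mem_iUnion.mp x.val.property
      choose nn hnn using this
      have : Finite S := hSfin
      obtain ⟨N, hN⟩ := Set.Finite.bddAbove (Set.finite_range nn)
      -- all elements of S are in Aseq N
      have hmem : ∀ x : S, (x.val : J) ∈ Aseq N := by
        intro x
        exact hmono (hN (Set.mem_range_self x)) (hnn x)
      -- finset of values
      have hvfin : (Set.range (fun x : S => (x.val.val : J))).Finite := Set.finite_range _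
      let F : Finset J := hvfin.toFinset
      have hmemF : ∀ x : S, (x.val.val : J) ∈ F := by
        intro x
        exact hvfin.mem_toFinset.mpr (Set.mem_range_self x)
      have hFsub : ↑F ⊆ Aseq N := by
        intro a ha
        obtain ⟨x, rfl⟩ := hvfin.mem_toFinset.mp ha
        exact hmem x
      have hmemU : u F ∈ ⋃ n, Aseq n := by
        refine Set.mem_iUnion.2 ⟨N + 1, ?_⟩
        exact Set.mem_union_right _ ⟨F, hFsub, rfl⟩
      refine ⟨⟨u F, hmemU⟩, ?_⟩
      intro a ha
      exact hu F a.val (hmemF ⟨a, ha⟩)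
    · -- cardinality
      have hℵμ : Cardinal.aleph0 < μ := hfin.trans_lt hA
      have key := Cardinal.mk_iUnion_le_lift (fun n : ℕ => Aseq n)
      simp only [Cardinal.lift_uzero, Cardinal.mk_nat, Cardinal.lift_aleph0] at key
      calc Cardinal.mk ↥(⋃ n, Aseq n)
          ≤ Cardinal.aleph0 * ⨆ n, Cardinal.mk ↥(Aseq n) := key
        _ ≤ Cardinal.aleph0 * Cardinal.mk ↥A := by
            gcongr
            exact ciSup_le' hcard
        _ ≤ Cardinal.mk ↥A * Cardinal.mk ↥A := by gcongr
        _ = Cardinal.mk ↥A := Cardinal.mul_eq_self hfin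
        _ < μ := hA



/-! ### Categorical part -/

lemma presentable_mono {κ κ' : Cardinal.{u}} (h : κ ≤ κ') {C : Type u₂} [Category.{u} C]
    {K : C} (hK : IsPresentable κ K) : IsPresentable κ' K :=
  fun J _ hJ => hK J (mono h hJ)

section Cat

variable {C : Type u₂} [Category.{u} C]

/-- factor a map out of a presentable object through a stage of a directed colimit -/
lemma fact1 {μ : Cardinal.{u}} {A : C} (hA : IsPresentable μ A) {J' : Type u} [Preorder J']
    (hJ' : IsCardDirected μ J') (F : J' ⥤ C) [HasColimit F] (g : A ⟶ colimit F) :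
    ∃ (j' : J') (h : A ⟶ F.obj j'), h ≫ colimit.ι F j' = g := by
  obtain ⟨pres⟩ := hA J' hJ'
  have hco : IsColimit ((coyoneda.obj (op A)).mapCocone (colimit.cocone F)) :=
    isColimitOfPreserves _ (colimit.isColimit F)
  obtain ⟨j', y, hy⟩ := Types.jointly_surjective _ hco g
  exact ⟨j', y, hy⟩

lemma fact2 {μ : Cardinal.{u}} (hμ : μ.IsRegular) {A : C} (hA : IsPresentable μ A)
    {J' : Type u} [Preorder J'] (hJ' : IsCardDirected μ J') (F : J' ⥤ C) [HasColimit F]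
    {j' : J'} (g₁ g₂ : A ⟶ F.obj j') (h : g₁ ≫ colimit.ι F j' = g₂ ≫ colimit.ι F j') :
    ∃ (k : J') (hk : j' ≤ k), g₁ ≫ F.map (homOfLE hk) = g₂ ≫ F.map (homOfLE hk) := by
  haveI : Nonempty J' := nonempty hμ.aleph0_le hJ'
  haveI : IsDirected J' (· ≤ ·) := directed hμ.aleph0_le hJ'
  obtain ⟨pres⟩ := hA J' hJ'
  have hco : IsColimit ((coyoneda.obj (op A)).mapCocone (colimit.cocone F)) :=
    isColimitOfPreserves _ (colimit.isColimit F)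
  have h' : ((coyoneda.obj (op A)).mapCocone (colimit.cocone F)).ι.app j' g₁ =
      ((coyoneda.obj (op A)).mapCocone (colimit.cocone F)).ι.app j' g₂ := h
  obtain ⟨k, f, g, he⟩ := (Types.FilteredColimit.isColimit_eq_iff _ hco).mp h'
  refine ⟨k, leOfHom f, ?_⟩
  have h1 : F.map (homOfLE (leOfHom f)) = F.map f := congrArg F.map (Subsingleton.elim _ _)
  have h2 : F.map (homOfLE (leOfHom f)) = F.map g := congrArg F.map (Subsingleton.elim _ _)
  calc g₁ ≫ F.map (homOfLE (leOfHom f)) = g₁ ≫ F.map f := by rw [h1]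
    _ = g₂ ≫ F.map g := he
    _ = g₂ ≫ F.map (homOfLE (leOfHom f)) := by rw [h2]

/-- a directed colimit of size `< μ` of `μ`-presentable objects is `μ`-presentable -/
lemma presentable_colimit {μ : Cardinal.{u}} (hμ : μ.IsRegular)
    (hdirC : ∀ (J : Type u) [Preorder J], IsCardDirected Cardinal.aleph0 J →
      HasColimitsOfShape J C)
    {M : Type u} [Preorder M] (hcard : Cardinal.mk M < μ)
    (G : M ⥤ C) [HasColimit G] (hG : ∀ m, IsPresentable μ (G.obj m)) :
    IsPresentable μ (colimit G) := by
  intro J' instJ' hJ'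
  haveI : Nonempty J' := nonempty hμ.aleph0_le hJ'
  haveI : IsDirected J' (· ≤ ·) := directed hμ.aleph0_le hJ'
  haveI : HasColimitsOfShape J' C := hdirC J' (mono hμ.aleph0_le hJ')
  refine ⟨⟨fun {F} => preservesColimit_of_preserves_colimit_cocone (colimit.isColimit F) ?_⟩⟩
  apply Types.FilteredColimit.isColimitOf
  · -- surjectivity
    intro x
    have hfac : ∀ m : M, ∃ (j' : J') (h : G.obj m ⟶ F.obj j'),
        h ≫ colimit.ι F j' = colimit.ι G m ≫ x := fun m => fact1 (hG m) hJ' F _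
    choose jm gm hgm using hfac
    obtain ⟨j₀, -, hj₀⟩ := bound hμ hJ' jm hcard Classical.ofNonempty
    set hm : ∀ m : M, G.obj m ⟶ F.obj j₀ := fun m => gm m ≫ F.map (homOfLE (hj₀ m)) with hhm
    have hcm : ∀ m, hm m ≫ colimit.ι F j₀ = colimit.ι G m ≫ x := by
      intro m
      rw [hhm]
      rw [Category.assoc, colimit.w F (homOfLE (hj₀ m)), hgm]
    -- for each related pair, find a stage where the cocone identity holds
    set T := {p : M × M // p.1 ≤ p.2} with hT
    have hTcard : Cardinal.mk T < μ := by
      refine lt_of_le_of_lt (Cardinal.mk_subtype_le _) ?_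
      rw [Cardinal.mk_prod, Cardinal.lift_id'.{u, u}]
      exact Cardinal.mul_lt_of_lt hμ.aleph0_le hcard hcard
    have hpair : ∀ p : T, ∃ (k : J') (hk : j₀ ≤ k),
        (G.map (homOfLE p.2) ≫ hm p.1.2) ≫ F.map (homOfLE hk) =
          hm p.1.1 ≫ F.map (homOfLE hk) := by
      intro p
      refine fact2 hμ (hG p.1.1) hJ' F _ _ ?_
      rw [Category.assoc, hcm, ← Category.assoc, colimit.w G (homOfLE p.2), hcm]
    choose kp hkp hkpe using hpair
    obtain ⟨k₀, hj₀k₀, hk₀⟩ := bound hμ hJ' kp hTcard j₀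
    -- build the cocone
    set cc : Cocone G :=
      { pt := F.obj k₀
        ι :=
          { app := fun m => hm m ≫ F.map (homOfLE hj₀k₀)
            naturality := fun m m' g => by
              dsimp
              rw [Category.comp_id]
              have hg : G.map g = G.map (homOfLE (leOfHom g)) :=
                congrArg G.map (Subsingleton.elim _ _)
              set p : T := ⟨(m, m'), leOfHom g⟩ with hp
              have h2 := congrArg (fun q => q ≫ F.map (homOfLE (hk₀ p))) (hkpe p)
              simp only [Category.assoc, ← F.map_comp, homOfLE_comp] at h2
              rw [hg]
              exact h2 } } with hcc
    refine ⟨k₀, colimit.desc G cc, ?_⟩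
    show x = colimit.desc G cc ≫ colimit.ι F k₀
    apply colimit.hom_ext
    intro m
    rw [← Category.assoc, colimit.ι_desc]
    show colimit.ι G m ≫ x = (hm m ≫ F.map (homOfLE hj₀k₀)) ≫ colimit.ι F k₀
    rw [Category.assoc, colimit.w F (homOfLE hj₀k₀), hcm]
  · -- injectivity
    intro i j x₁ x₂ h
    replace h : x₁ ≫ colimit.ι F i = x₂ ≫ colimit.ι F j := h
    obtain ⟨j₃, h1, h2⟩ := directed_of (· ≤ ·) i j
    have hy : (x₁ ≫ F.map (homOfLE h1)) ≫ colimit.ι F j₃ =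
        (x₂ ≫ F.map (homOfLE h2)) ≫ colimit.ι F j₃ := by
      rw [Category.assoc, Category.assoc, colimit.w, colimit.w, h]
    have hfac : ∀ m : M, ∃ (k : J') (hk : j₃ ≤ k),
        (colimit.ι G m ≫ x₁ ≫ F.map (homOfLE h1)) ≫ F.map (homOfLE hk) =
          (colimit.ι G m ≫ x₂ ≫ F.map (homOfLE h2)) ≫ F.map (homOfLE hk) := by
      intro m
      refine fact2 hμ (hG m) hJ' F _ _ ?_
      simp only [Category.assoc]
      rw [show x₁ ≫ F.map (homOfLE h1) ≫ colimit.ι F j₃ =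
        x₂ ≫ F.map (homOfLE h2) ≫ colimit.ι F j₃ from by simpa [Category.assoc] using hy]
    choose km hkm hkme using hfac
    obtain ⟨k₀, hj₃k₀, hk₀⟩ := bound hμ hJ' km hcard j₃
    refine ⟨k₀, homOfLE (h1.trans hj₃k₀), homOfLE (h2.trans hj₃k₀), ?_⟩
    show x₁ ≫ F.map (homOfLE (h1.trans hj₃k₀)) = x₂ ≫ F.map (homOfLE (h2.trans hj₃k₀))
    apply colimit.hom_ext
    intro m
    have h2' := congrArg (fun q => q ≫ F.map (homOfLE (hk₀ m))) (hkme m)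
    simp only [Category.assoc, ← F.map_comp, homOfLE_comp] at h2'
    exact h2'

end Cat

/-- The poset of `ℵ₀`-directed subsets of size `< μ`. -/
def PSet (μ : Cardinal.{u}) (J₀ : Type u) [Preorder J₀] : Type u :=
  {M : Set J₀ // IsCardDirected Cardinal.aleph0 ↥M ∧ Cardinal.mk ↥M < μ}

instance (μ : Cardinal.{u}) (J₀ : Type u) [Preorder J₀] : Preorder (PSet μ J₀) :=
  Subtype.preorder _

lemma PSet_le {μ : Cardinal.{u}} {J₀ : Type u} [Preorder J₀] {M M' : PSet μ J₀}
    (h : M ≤ M') : M.val ⊆ M'.val := h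

lemma singleton_directed {J₀ : Type u} [Preorder J₀] (j : J₀) :
    IsCardDirected Cardinal.aleph0 ↥({j} : Set J₀) :=
  fun _ _ => ⟨⟨j, rfl⟩, fun a _ => le_of_eq (Subtype.ext a.2)⟩

lemma pair_directed {J₀ : Type u} [Preorder J₀] {j j' : J₀} (h : j ≤ j') :
    IsCardDirected Cardinal.aleph0 ↥({j, j'} : Set J₀) := by
  intro S _
  refine ⟨⟨j', Set.mem_insert_iff.mpr (Or.inr rfl)⟩, fun a _ => ?_⟩
  show (a : J₀) ≤ j'
  rcases a.2 with h1 | h1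
  · exact le_trans (le_of_eq h1) h
  · exact le_of_eq h1

lemma small_of_finite {μ : Cardinal.{u}} (hμ : μ.IsRegular) {J₀ : Type u} (A : Set J₀)
    (hA : A.Finite) : Cardinal.mk ↥A < μ :=
  lt_of_lt_of_le hA.lt_aleph0 hμ.aleph0_le

/-- singleton element of `PSet` -/
def sing {J₀ : Type u} [Preorder J₀] (μ : Cardinal.{u}) (hμ : μ.IsRegular) (j : J₀) :
    PSet μ J₀ :=
  ⟨{j}, singleton_directed j, small_of_finite hμ _ (Set.finite_singleton j)⟩

def pairP {J₀ : Type u} [Preorder J₀] (μ : Cardinal.{u}) (hμ : μ.IsRegular) {j j' : J₀}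
    (h : j ≤ j') : PSet μ J₀ :=
  ⟨{j, j'}, pair_directed h, small_of_finite hμ _ (Set.toFinite _)⟩

lemma P_directed {lam μ : Cardinal.{u}} (hlam : lam.IsRegular) (hμ : μ.IsRegular)
    (hle : lam ≤ μ) {J₀ : Type u} [Preorder J₀] (hJ : IsCardDirected lam J₀) :
    IsCardDirected μ (PSet μ J₀) := by
  intro 𝒮 h𝒮
  set A : Set J₀ := ⋃ (M : 𝒮), ((M : PSet μ J₀).val : Set J₀) with hA
  have hAcard : Cardinal.mk ↥A < μ := by
    refine lt_of_le_of_lt (Cardinal.mk_iUnion_le _) ?_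
    exact Cardinal.mul_lt_of_lt hμ.aleph0_le h𝒮
      (Cardinal.iSup_lt_of_isRegular hμ h𝒮 fun M => (M : PSet μ J₀).2.2)
  obtain ⟨M, hAM, hdirM, hcardM⟩ := closure hlam hμ hle hJ A hAcard
  refine ⟨⟨M, hdirM, hcardM⟩, fun N hN => ?_⟩
  intro x hx
  exact hAM (Set.mem_iUnion.mpr ⟨⟨N, hN⟩, hx⟩)

section Cat2

variable {C : Type u₂} [Category.{u} C] {J₀ : Type u} [Preorder J₀] (D : J₀ ⥤ C)
variable (μ : Cardinal.{u})

/-- inclusion of a subset as a functor -/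
def incl (M : Set J₀) : ↥M ⥤ J₀ :=
  Monotone.functor (f := (Subtype.val : ↥M → J₀)) fun _ _ h => h

variable [∀ M : PSet μ J₀, HasColimitsOfShape (↥M.val) C]

/-- the functor sending a small directed subset to the colimit of `D` restricted to it -/
noncomputable def EF : PSet μ J₀ ⥤ C where
  obj M := colimit (incl M.val ⋙ D)
  map {M M'} f := colimit.desc (incl M.val ⋙ D)
    { pt := colimit (incl M'.val ⋙ D)
      ι :=
        { app := fun j => colimit.ι (incl M'.val ⋙ D) ⟨j.1, PSet_le (leOfHom f) j.2⟩
          naturality := fun j j' g => by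
            dsimp
            erw [Category.comp_id]
            have harg : (incl M.val).map g = (incl M'.val).map
                (homOfLE (show (⟨j.1, PSet_le (leOfHom f) j.2⟩ : ↥M'.val) ≤
                  ⟨j'.1, PSet_le (leOfHom f) j'.2⟩ from leOfHom g)) :=
              Subsingleton.elim _ _
            rw [harg]
            exact colimit.w (incl M'.val ⋙ D) _ } }
  map_id M := by
    apply colimit.hom_ext
    intro j
    rw [colimit.ι_desc, Category.comp_id]
  map_comp {M M' M''} f g := by
    apply colimit.hom_ext
    intro j
    rw [colimit.ι_desc, ← Category.assoc, colimit.ι_desc]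
    dsimp
    erw [colimit.ι_desc]

lemma EF_ι_map {M M' : PSet μ J₀} (h : M ⟶ M') {j : J₀} (hj : j ∈ M.val) :
    colimit.ι (incl M.val ⋙ D) ⟨j, hj⟩ ≫ (EF D μ).map h =
      colimit.ι (incl M'.val ⋙ D) ⟨j, PSet_le (leOfHom h) hj⟩ := by
  dsimp [EF]
  rw [colimit.ι_desc]

lemma ι_app_eq (s : Cocone (EF D μ)) {M M' : PSet μ J₀} (h : M ≤ M') {j : J₀}
    (hj : j ∈ M.val) :
    colimit.ι (incl M.val ⋙ D) ⟨j, hj⟩ ≫ s.ι.app M =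
      colimit.ι (incl M'.val ⋙ D) ⟨j, PSet_le h hj⟩ ≫ s.ι.app M' := by
  erw [← s.w (homOfLE h), ← Category.assoc, EF_ι_map]
  rfl

/-- the cocone on `EF` induced by a cocone on `D` -/
noncomputable def EFcocone (c : Cocone D) : Cocone (EF D μ) where
  pt := c.pt
  ι :=
    { app := fun M => colimit.desc (incl M.val ⋙ D) (c.whisker (incl M.val))
      naturality := fun M M' f => by
        dsimp
        erw [Category.comp_id]
        apply colimit.hom_ext
        intro j
        erw [← Category.assoc, EF_ι_map, colimit.ι_desc, colimit.ι_desc]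
        rfl }

lemma EFcocone_ι (c : Cocone D) (M : PSet μ J₀) {j : J₀} (hj : j ∈ M.val) :
    colimit.ι (incl M.val ⋙ D) ⟨j, hj⟩ ≫ (EFcocone D μ c).ι.app M = c.ι.app j := by
  dsimp [EFcocone]
  rw [colimit.ι_desc]
  rfl

/-- the cocone on `D` induced by a cocone on `EF` -/
noncomputable def descCocone (hμ : μ.IsRegular) (s : Cocone (EF D μ)) : Cocone D where
  pt := s.pt
  ι :=
    { app := fun j =>
        colimit.ι (incl (sing μ hμ j).val ⋙ D) ⟨j, rfl⟩ ≫ s.ι.app (sing μ hμ j)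
      naturality := fun j j' g => by
        dsimp
        rw [Category.comp_id]
        have h1 : sing μ hμ j ≤ pairP μ hμ (leOfHom g) := by
          intro x hx
          exact Set.mem_insert_iff.mpr (Or.inl hx)
        have h2 : sing μ hμ j' ≤ pairP μ hμ (leOfHom g) := by
          intro x hx
          exact Set.mem_insert_iff.mpr (Or.inr hx)
        erw [ι_app_eq D μ s h1 rfl, ι_app_eq D μ s h2 rfl, ← Category.assoc,
          show D.map g = D.map ((incl (pairP μ hμ (leOfHom g)).val).map
            (homOfLE (show (⟨j, h1 rfl⟩ : ↥(pairP μ hμ (leOfHom g)).val) ≤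
              ⟨j', h2 rfl⟩ from leOfHom g))) from congrArg D.map (Subsingleton.elim _ _)]
        congr 1
        exact colimit.w (incl (pairP μ hμ (leOfHom g)).val ⋙ D) _ }

noncomputable def EFisColimit (hμ : μ.IsRegular) (c : Cocone D) (hc : IsColimit c) :
    IsColimit (EFcocone D μ c) where
  desc s := hc.desc (descCocone D μ hμ s)
  fac s M := by
    apply colimit.hom_ext
    intro j
    erw [← Category.assoc, EFcocone_ι D μ c M j.2, hc.fac]
    show colimit.ι (incl (sing μ hμ j.1).val ⋙ D) ⟨j.1, rfl⟩ ≫ s.ι.app (sing μ hμ j.1) = _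
    have hsM : sing μ hμ j.1 ≤ M := by
      rintro x (rfl : x = j.1)
      exact j.2
    rw [ι_app_eq D μ s hsM rfl]
  uniq s m hm := by
    refine hc.uniq (descCocone D μ hμ s) m fun j => ?_
    erw [← EFcocone_ι D μ c (sing μ hμ j) (show j ∈ ({j} : Set J₀) from rfl),
      Category.assoc, hm]
    rfl

end Cat2
end Aux14

/-- An accessible category with all directed colimits which is `λ`-accessible is `μ`-accessible
for every regular `μ ≥ λ`. -/
theorem stmt14 (C : Type u₂) [Category.{u} C] (lam : Cardinal.{u}) (hlam : lam.IsRegular)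
    (hacc : IsAccessible lam C) (hdir : HasDirectedColimits C)
    (μ : Cardinal.{u}) (hμ : μ.IsRegular) (hle : lam ≤ μ) :
    IsAccessible μ C := by
  classical
  constructor
  · intro J instJ hJ
    exact hacc.hasColimits J (Aux14.mono hle hJ)
  · obtain ⟨S, hS, hpres⟩ := hacc.generators
    refine ⟨{A | IsPresentable μ A}, fun A hA => hA, fun X => ?_⟩
    obtain ⟨p⟩ := hpres X
    letI := p.inst
    haveI : ∀ M : Aux14.PSet μ p.J, HasColimitsOfShape (↥M.val) C :=
      fun M => hdir ↥M.val M.2.1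
    refine ⟨{ J := Aux14.PSet μ p.J
              inst := inferInstance
              directed := Aux14.P_directed hlam hμ hle p.directed
              D := Aux14.EF p.D μ
              mem := ?_
              cocone := Aux14.EFcocone p.D μ p.cocone
              isColimit := Aux14.EFisColimit p.D μ hμ p.cocone p.isColimit
              iso := p.iso }⟩
    intro M
    show IsPresentable μ (colimit (Aux14.incl M.val ⋙ p.D))
    refine Aux14.presentable_colimit hμ (fun J _ hJ => hdir J hJ) M.2.2 _ ?_
    intro m
    exact Aux14.presentable_mono hle (hS _ (p.mem m.1))
end

section
/- Let (K,U) be a coherent accessible category with concrete directed colimits in which all morphisms are monomorphisms preserved by U, and let λ be a sufficiently large regular cardinal (with monster objects available). If K is λ-saturated in the injectivity sense, then every object K that is λ-saturated is λ-Galois saturated: for every g : M → K with M λ-presentable and every type (f,a) over M, there exists b ∈ U(K) such that (f,a) and (g,b) are equivalent. -/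
open CategoryTheory Limits Opposite

universe u u₂ u₃

namespace Stmt15Aux

open Cardinal

variable {J : Type u} [Preorder J]

theorem cardDirected_mono {κ κ' : Cardinal.{u}} (h : κ' ≤ κ)
    (hd : IsCardDirected κ J) : IsCardDirected κ' J :=
  fun S hS => hd S (hS.trans_le h)

theorem cardDirected_nonempty {κ : Cardinal.{u}} (hκ : ℵ₀ ≤ κ)
    (h : IsCardDirected κ J) : Nonempty J := by
  obtain ⟨b, -⟩ := h ∅ (by simpa using aleph0_pos.trans_le hκ)
  exact ⟨b⟩

theorem cardDirected_isDirected {κ : Cardinal.{u}} (hκ : ℵ₀ ≤ κ)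
    (h : IsCardDirected κ J) : IsDirected J (· ≤ ·) := by
  constructor
  intro a b
  obtain ⟨c, hc⟩ := h {a, b} (((Set.finite_singleton b).insert a).lt_aleph0.trans_le hκ)
  exact ⟨c, hc a (by simp), hc b (by simp)⟩

theorem isCardDirected_aleph0_of_directedOn {S : Set J} (hne : S.Nonempty)
    (hd : DirectedOn (· ≤ ·) S) : IsCardDirected ℵ₀ ↥S := by
  intro X hX
  have hfin : X.Finite := lt_aleph0_iff_set_finite.1 hX
  haveI : Nonempty ↥S := hne.to_subtype
  haveI : IsDirected ↥S (· ≤ ·) := by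
    constructor
    rintro ⟨a, ha⟩ ⟨b, hb⟩
    obtain ⟨c, hc, h1, h2⟩ := hd a ha b hb
    exact ⟨⟨c, hc⟩, h1, h2⟩
  obtain ⟨m, hm⟩ := Finset.exists_le hfin.toFinset
  exact ⟨m, fun x hx => hm x (hfin.mem_toFinset.2 hx)⟩

/-- The poset of nonempty directed subsets of `J` of size `< lam`. -/
abbrev DirSub (lam : Cardinal.{u}) (J : Type u) [Preorder J] : Type u :=
  {S : Set J // S.Nonempty ∧ DirectedOn (· ≤ ·) S ∧ Cardinal.mk S < lam}

theorem dirSub_directed {κ lam : Cardinal.{u}} (hκ : κ.IsRegular) (hlam : lam.IsRegular)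
    (hbig : κ ≤ lam) (hJ : IsCardDirected κ J) : IsCardDirected lam (DirSub lam J) := by
  intro W hW
  -- the union of all members of W
  set T : Set J := ⋃ S : W, (S : Set J) with hTdef
  have hT : Cardinal.mk T < lam := by
    refine (mk_iUnion_le _).trans_lt ?_
    exact mul_lt_of_lt hlam.aleph0_le hW
      (iSup_lt_of_isRegular hlam hW fun S => S.1.2.2.2)
  -- it suffices to find a good superset of T
  suffices h : ∃ S' : DirSub lam J, T ⊆ S'.1 by
    obtain ⟨S', hS'⟩ := h
    exact ⟨S', fun S hS => fun x hx =>
      hS' (Set.mem_iUnion.2 ⟨⟨S, hS⟩, hx⟩)⟩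
  by_cases hcase : Cardinal.mk T < κ
  · -- bound T by a single element
    obtain ⟨j₀, hj₀⟩ := hJ T hcase
    refine ⟨⟨insert j₀ T, ⟨j₀, Set.mem_insert _ _⟩, ?_, ?_⟩, Set.subset_insert _ _⟩
    · intro a ha b hb
      refine ⟨j₀, Set.mem_insert _ _, ?_, ?_⟩
      · rcases ha with rfl | ha
        · exact le_refl _
        · exact hj₀ a ha
      · rcases hb with rfl | hb
        · exact le_refl _
        · exact hj₀ b hb
    · exact (mk_insert_le).trans_lt
        (add_lt_of_lt hlam.aleph0_le (hT.trans_le le_rfl)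
          (one_lt_aleph0.trans_le hlam.aleph0_le))
  · -- T is infinite; close it under binary upper bounds
    push_neg at hcase
    have hTinf : ℵ₀ ≤ Cardinal.mk T := hκ.aleph0_le.trans hcase
    -- choice of binary upper bounds
    have hub : ∀ a b : J, ∃ c, a ≤ c ∧ b ≤ c := by
      intro a b
      obtain ⟨c, hc⟩ := hJ {a, b}
        (((Set.finite_singleton b).insert a).lt_aleph0.trans_le hκ.aleph0_le)
      exact ⟨c, hc a (by simp), hc b (by simp)⟩
    choose ub hub₁ hub₂ using hub
    set Tn : ℕ → Set J := fun n => Nat.rec T (fun _ Tp => Tp ∪ Set.image2 ub Tp Tp) n with hTn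
    have hTmono : ∀ n, Tn n ⊆ Tn (n + 1) := fun n => Set.subset_union_left
    have hTmono' : ∀ {m n}, m ≤ n → Tn m ⊆ Tn n := by
      intro m n h
      induction h with
      | refl => exact le_rfl
      | step h ih => exact ih.trans (hTmono _)
    have hTcard : ∀ n, Cardinal.mk (Tn n) ≤ Cardinal.mk T := by
      intro n
      induction n with
      | zero => exact le_rfl
      | succ n ih =>
        refine (mk_union_le _ _).trans ?_
        have : Cardinal.mk (Set.image2 ub (Tn n) (Tn n)) ≤ Cardinal.mk T := by
          refine (mk_image2_le).trans ?_
          calc Cardinal.mk (Tn n) * Cardinal.mk (Tn n)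
              ≤ Cardinal.mk T * Cardinal.mk T := mul_le_mul' ih ih
            _ = Cardinal.mk T := mul_eq_self hTinf
        calc Cardinal.mk (Tn n) + Cardinal.mk (Set.image2 ub (Tn n) (Tn n))
            ≤ Cardinal.mk T + Cardinal.mk T := add_le_add ih this
          _ = Cardinal.mk T := add_eq_self hTinf
    set S' : Set J := ⋃ n : ULift.{u} ℕ, Tn n.down with hS'def
    have hTS' : T ⊆ S' := Set.subset_iUnion (fun n : ULift.{u} ℕ => Tn n.down) ⟨0⟩
    have hScard : Cardinal.mk S' < lam := by
      rw [hS'def]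
      refine (mk_iUnion_le _).trans_lt ?_
      have h1 : (⨆ n : ULift.{u} ℕ, Cardinal.mk (Tn n.down)) ≤ Cardinal.mk T :=
        ciSup_le' fun n => hTcard n.down
      calc Cardinal.mk (ULift.{u} ℕ) * ⨆ n : ULift.{u} ℕ, Cardinal.mk (Tn n.down)
          ≤ Cardinal.mk T * Cardinal.mk T := by
            refine mul_le_mul' ?_ h1
            simpa using hTinf
        _ = Cardinal.mk T := mul_eq_self hTinf
        _ < lam := hT
    have hSne : S'.Nonempty := by
      have : T.Nonempty := by
        rw [← Set.nonempty_coe_sort, ← Cardinal.mk_ne_zero_iff]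
        exact (aleph0_pos.trans_le hTinf).ne'
      exact this.mono hTS'
    refine ⟨⟨S', hSne, ?_, hScard⟩, hTS'⟩
    intro a ha b hb
    obtain ⟨na, hna⟩ := Set.mem_iUnion.1 ha
    obtain ⟨nb, hnb⟩ := Set.mem_iUnion.1 hb
    have ha' : a ∈ Tn (max na.down nb.down) := hTmono' (le_max_left _ _) hna
    have hb' : b ∈ Tn (max na.down nb.down) := hTmono' (le_max_right _ _) hnb
    refine ⟨ub a b, Set.mem_iUnion.2 ⟨⟨max na.down nb.down + 1⟩, ?_⟩, hub₁ a b, hub₂ a b⟩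
    exact Set.mem_union_right _ (Set.mem_image2_of_mem ha' hb')

section CatPart

open Cardinal

variable {C : Type u₂} [Category.{u} C] {J : Type u} [Preorder J] (D : J ⥤ C)

/-- Inclusion of a subset of a preorder as a functor. -/
def inclF (S : Set J) : ↥S ⥤ J :=
  Monotone.functor (f := (Subtype.val : S → J)) fun _ _ h => h

@[simp] lemma inclF_obj (S : Set J) (s : ↥S) : (inclF S).obj s = s.1 := rfl

noncomputable def NSobj (S : Set J) [HasColimitsOfShape ↥S C] : C :=
  colimit (inclF S ⋙ D)

noncomputable def NSι (S : Set J) [HasColimitsOfShape ↥S C] (s : ↥S) :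
    D.obj s.1 ⟶ NSobj D S :=
  colimit.ι (inclF S ⋙ D) s

lemma NSι_w (S : Set J) [HasColimitsOfShape ↥S C] {s s' : ↥S} (h : s.1 ≤ s'.1) :
    D.map (homOfLE h) ≫ NSι D S s' = NSι D S s :=
  colimit.w (inclF S ⋙ D) (homOfLE (show s ≤ s' from h))

noncomputable def NSmap {S S' : Set J} [HasColimitsOfShape ↥S C]
    [HasColimitsOfShape ↥S' C] (h : S ⊆ S') : NSobj D S ⟶ NSobj D S' :=
  colimit.desc _
    { pt := NSobj D S'
      ι :=
        { app := fun s => NSι D S' ⟨s.1, h s.2⟩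
          naturality := fun s s' φ => by
            have := NSι_w D S' (s := ⟨s.1, h s.2⟩) (s' := ⟨s'.1, h s'.2⟩) (leOfHom φ)
            simp
            exact this } }

@[simp] lemma NSι_map {S S' : Set J} [HasColimitsOfShape ↥S C]
    [HasColimitsOfShape ↥S' C] (h : S ⊆ S') (s : ↥S) :
    NSι D S s ≫ NSmap D h = NSι D S' ⟨s.1, h s.2⟩ :=
  colimit.ι_desc _ _

noncomputable def NSdesc (S : Set J) [HasColimitsOfShape ↥S C] (E : Cocone D) :
    NSobj D S ⟶ E.pt :=
  colimit.desc _ (E.whisker (inclF S))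

@[simp] lemma NSι_desc (S : Set J) [HasColimitsOfShape ↥S C] (E : Cocone D) (s : ↥S) :
    NSι D S s ≫ NSdesc D S E = E.ι.app s.1 :=
  colimit.ι_desc _ _

lemma NSmap_desc {S S' : Set J} [HasColimitsOfShape ↥S C]
    [HasColimitsOfShape ↥S' C] (h : S ⊆ S') (E : Cocone D) :
    NSmap D h ≫ NSdesc D S' E = NSdesc D S E := by
  apply colimit.hom_ext
  intro s
  show NSι D S s ≫ NSmap D h ≫ NSdesc D S' E = NSι D S s ≫ NSdesc D S E
  rw [← Category.assoc]
  erw [NSι_map, NSι_desc, NSι_desc]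

lemma NSobj_hom_ext {S : Set J} [HasColimitsOfShape ↥S C] {Z : C}
    {f g : NSobj D S ⟶ Z} (w : ∀ s : ↥S, NSι D S s ≫ f = NSι D S s ≫ g) : f = g :=
  colimit.hom_ext w

end CatPart

section Grand

open Cardinal

variable {C : Type u₂} [Category.{u} C] {J : Type u} [Preorder J] (D : J ⥤ C)
variable (lam : Cardinal.{u})
variable (hcsh : ∀ S : Set J, S.Nonempty → DirectedOn (· ≤ ·) S → HasColimitsOfShape ↥S C)

/-- The diagram of subset-colimits over the poset of small directed subsets. -/
noncomputable def DsFun : DirSub lam J ⥤ C where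
  obj S := haveI := hcsh S.1 S.2.1 S.2.2.1; NSobj D S.1
  map {S S'} φ :=
    haveI := hcsh S.1 S.2.1 S.2.2.1
    haveI := hcsh S'.1 S'.2.1 S'.2.2.1
    NSmap D (leOfHom φ)
  map_id S := by
    haveI := hcsh S.1 S.2.1 S.2.2.1
    apply NSobj_hom_ext
    intro s
    rw [NSι_map, Category.comp_id]
  map_comp {S S' S''} φ ψ := by
    haveI := hcsh S.1 S.2.1 S.2.2.1
    haveI := hcsh S'.1 S'.2.1 S'.2.2.1
    haveI := hcsh S''.1 S''.2.1 S''.2.2.1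
    apply NSobj_hom_ext
    intro s
    rw [NSι_map, ← Category.assoc, NSι_map, NSι_map]

variable (c : Cocone D)

/-- The grand cocone over `DsFun` with point `c.pt`. -/
noncomputable def gammaCocone : Cocone (DsFun D lam hcsh) where
  pt := c.pt
  ι :=
    { app := fun S => haveI := hcsh S.1 S.2.1 S.2.2.1; NSdesc D S.1 c
      naturality := fun S S' φ => by
        haveI := hcsh S.1 S.2.1 S.2.2.1
        haveI := hcsh S'.1 S'.2.1 S'.2.2.1
        have := NSmap_desc D (leOfHom φ) c
        dsimp [DsFun]
        rw [Category.comp_id]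
        exact this }

lemma NSι_DsFun_map {S S' : DirSub lam J} (φ : S ⟶ S') (s : ↥(S.1)) :
    haveI := hcsh S.1 S.2.1 S.2.2.1
    haveI := hcsh S'.1 S'.2.1 S'.2.2.1
    NSι D S.1 s ≫ (DsFun D lam hcsh).map φ = NSι D S'.1 ⟨s.1, leOfHom φ s.2⟩ := by
  haveI := hcsh S.1 S.2.1 S.2.2.1
  haveI := hcsh S'.1 S'.2.1 S'.2.2.1
  exact NSι_map D (leOfHom φ) s

variable {lam} in
/-- Singleton subsets. -/
abbrev sgl (h1 : ℵ₀ ≤ lam) (j : J) : DirSub lam J :=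
  ⟨{j}, ⟨j, rfl⟩, fun a ha b hb => ⟨j, rfl, by rw [ha], by rw [hb]⟩,
    by simpa using one_lt_aleph0.trans_le h1⟩

variable {lam} in
/-- Pair subsets `{j, j'}` for `j ≤ j'`. -/
abbrev pr (h1 : ℵ₀ ≤ lam) {j j' : J} (_ : j ≤ j') : DirSub lam J :=
  ⟨{j, j'}, ⟨j, by simp⟩, fun a ha b hb => by
      refine ⟨j', by simp, ?_, ?_⟩
      · rcases ha with rfl | ha
        · assumption
        · simp_all
      · rcases hb with rfl | hb
        · assumption
        · simp_all,
    by
      refine (mk_insert_le).trans_lt ?_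
      have : Cardinal.mk ({j'} : Set J) = 1 := mk_singleton _
      rw [this]
      exact (add_lt_aleph0 one_lt_aleph0 one_lt_aleph0).trans_le h1⟩

variable {lam}

lemma sgl_le_pr (h1 : ℵ₀ ≤ lam) {j j' : J} (h : j ≤ j') :
    sgl h1 j ≤ pr h1 h := by
  intro x hx; rw [hx]; exact Set.mem_insert _ _

lemma sgl_le_pr' (h1 : ℵ₀ ≤ lam) {j j' : J} (h : j ≤ j') :
    sgl h1 j' ≤ pr h1 h := by
  intro x hx; rw [hx]; exact Set.mem_insert_of_mem _ rfl

lemma NSι_natural {S : Set J} [HasColimitsOfShape ↥S C] {j j' : J} (φ : j ⟶ j')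
    (hj : j ∈ S) (hj' : j' ∈ S) :
    D.map φ ≫ NSι D S ⟨j', hj'⟩ = NSι D S ⟨j, hj⟩ :=
  NSι_w D S (s := ⟨j, hj⟩) (s' := ⟨j', hj'⟩) (leOfHom φ)

/-- A cocone over `D` extracted from a cocone over `DsFun`. -/
noncomputable def coconeOf (h1 : ℵ₀ ≤ lam) (E : Cocone (DsFun D lam hcsh)) : Cocone D where
  pt := E.pt
  ι :=
    { app := fun j =>
        haveI := hcsh _ (sgl (lam := lam) h1 j).2.1 (sgl (lam := lam) h1 j).2.2.1
        NSι D {j} ⟨j, rfl⟩ ≫ E.ι.app (sgl h1 j)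
      naturality := fun j j' φ => by
        haveI hs := hcsh _ (sgl (lam := lam) h1 j).2.1 (sgl (lam := lam) h1 j).2.2.1
        haveI hs' := hcsh _ (sgl (lam := lam) h1 j').2.1 (sgl (lam := lam) h1 j').2.2.1
        haveI hp := hcsh _ (pr (lam := lam) h1 (leOfHom φ)).2.1 (pr (lam := lam) h1 (leOfHom φ)).2.2.1
        dsimp
        rw [Category.comp_id]
        have hjm : j ∈ ({j, j'} : Set J) := by simp
        have hjm' : j' ∈ ({j, j'} : Set J) := by simp
        calc D.map φ ≫ NSι D {j'} ⟨j', rfl⟩ ≫ E.ι.app (sgl h1 j')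
            = D.map φ ≫ NSι D {j'} ⟨j', rfl⟩ ≫
                (DsFun D lam hcsh).map (homOfLE (sgl_le_pr' h1 (leOfHom φ))) ≫
                E.ι.app (pr h1 (leOfHom φ)) := by erw [E.w]
          _ = (D.map φ ≫ NSι D {j, j'} ⟨j', hjm'⟩) ≫ E.ι.app (pr h1 (leOfHom φ)) := by
                erw [← Category.assoc (NSι D {j'} ⟨j', rfl⟩),
                  NSι_DsFun_map D lam hcsh (homOfLE (sgl_le_pr' h1 (leOfHom φ))) ⟨j', rfl⟩,
                  Category.assoc]
                rfl
          _ = NSι D {j, j'} ⟨j, hjm⟩ ≫ E.ι.app (pr h1 (leOfHom φ)) := by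
                rw [NSι_natural D φ hjm hjm']
          _ = (NSι D {j} ⟨j, rfl⟩ ≫
                (DsFun D lam hcsh).map (homOfLE (sgl_le_pr h1 (leOfHom φ)))) ≫
                E.ι.app (pr h1 (leOfHom φ)) := by
                erw [NSι_DsFun_map D lam hcsh (homOfLE (sgl_le_pr h1 (leOfHom φ))) ⟨j, rfl⟩]
                rfl
          _ = NSι D {j} ⟨j, rfl⟩ ≫ E.ι.app (sgl h1 j) := by
                erw [Category.assoc, E.w] }


lemma sgl_le (h1 : ℵ₀ ≤ lam) {S : DirSub lam J} (s : ↥(S.1)) : sgl h1 s.1 ≤ S := by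
  intro x hx; rw [hx]; exact s.2

/-- The grand cocone is a colimit cocone. -/
noncomputable def gammaIsColimit (h1 : ℵ₀ ≤ lam) (hc : IsColimit c) :
    IsColimit (gammaCocone D lam hcsh c) where
  desc E := hc.desc (coconeOf D hcsh h1 E)
  fac E S := by
    haveI := hcsh S.1 S.2.1 S.2.2.1
    apply NSobj_hom_ext
    intro s
    haveI := hcsh _ (sgl (lam := lam) h1 s.1).2.1 (sgl (lam := lam) h1 s.1).2.2.1
    calc @id (D.obj s.1 ⟶ E.pt) (NSι D S.1 s ≫ (gammaCocone D lam hcsh c).ι.app S ≫ hc.desc (coconeOf D hcsh h1 E))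
        = @id (D.obj s.1 ⟶ E.pt) (c.ι.app s.1 ≫ hc.desc (coconeOf D hcsh h1 E)) := by
          erw [← Category.assoc]
          congr 2
          exact NSι_desc D S.1 c s
      _ = NSι D {s.1} ⟨s.1, rfl⟩ ≫ E.ι.app (sgl h1 s.1) := hc.fac _ s.1
      _ = NSι D {s.1} ⟨s.1, rfl⟩ ≫ (DsFun D lam hcsh).map (homOfLE (sgl_le h1 s)) ≫
            E.ι.app S := by erw [E.w]
      _ = NSι D S.1 ⟨s.1, s.2⟩ ≫ E.ι.app S := by
          erw [← Category.assoc, NSι_DsFun_map D lam hcsh (homOfLE (sgl_le h1 s)) ⟨s.1, rfl⟩]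
          rfl
      _ = NSι D S.1 s ≫ E.ι.app S := rfl
  uniq E m hm := by
    refine hc.uniq (coconeOf D hcsh h1 E) m fun j => ?_
    haveI := hcsh _ (sgl (lam := lam) h1 j).2.1 (sgl (lam := lam) h1 j).2.2.1
    have h2 : NSι D {j} ⟨j, rfl⟩ ≫ NSdesc D {j} c = c.ι.app j := NSι_desc D {j} c ⟨j, rfl⟩
    calc c.ι.app j ≫ m = NSι D {j} ⟨j, rfl⟩ ≫ NSdesc D {j} c ≫ m := by
          erw [← Category.assoc, h2]
      _ = NSι D {j} ⟨j, rfl⟩ ≫ E.ι.app (sgl h1 j) := by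
          rw [show NSdesc D {j} c ≫ m = E.ι.app (sgl h1 j) from hm (sgl h1 j)]
      _ = @id (D.obj j ⟶ E.pt) ((coconeOf D hcsh h1 E).ι.app j) := rfl

end Grand

lemma hom_eq {α : Type*} [Preorder α] {a b : α} (f g : a ⟶ b) : f = g := by
  rcases f with ⟨⟨f⟩⟩; rcases g with ⟨⟨g⟩⟩; rfl

section Pres

open Cardinal

variable {C : Type u₂} [Category.{u} C]

lemma map_trans {Jc : Type u} [Preorder Jc] (E : Jc ⥤ C) {a b c : Jc}
    (h1 : a ≤ b) (h2 : b ≤ c) (h3 : a ≤ c) :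
    E.map (homOfLE h3) = E.map (homOfLE h1) ≫ E.map (homOfLE h2) := by
  rw [← E.map_comp]
  exact congrArg E.map (hom_eq _ _)

theorem mapped_isColimit (lam : Cardinal.{u}) (hlam : lam.IsRegular) {Jp : Type u} [Preorder Jp]
    [Nonempty Jp] [IsDirected Jp (· ≤ ·)] (hJp : Cardinal.mk Jp < lam)
    {F : Jp ⥤ C} (hF : ∀ j, IsPresentable lam (F.obj j))
    {t : Cocone F} (ht : IsColimit t) (Jc : Type u) [Preorder Jc]
    (hJc : IsCardDirected lam Jc) (E : Jc ⥤ C) (tc : Cocone E) (htc : IsColimit tc) :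
    Nonempty (IsColimit ((coyoneda.obj (op t.pt)).mapCocone tc)) := by
  haveI : Nonempty Jc := cardDirected_nonempty hlam.aleph0_le hJc
  haveI : IsDirected Jc (· ≤ ·) := cardDirected_isDirected hlam.aleph0_le hJc
  have hcol : ∀ j : Jp, IsColimit ((coyoneda.obj (op (F.obj j))).mapCocone tc) := fun j => by
    haveI := (hF j Jc hJc).some
    exact isColimitOfPreserves _ htc
  have hpairs : Cardinal.mk {p : Jp × Jp // p.1 ≤ p.2} < lam := by
    refine (mk_subtype_le _).trans_lt ?_
    rw [Cardinal.mk_prod]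
    simpa using mul_lt_of_lt hlam.aleph0_le hJp hJp
  constructor
  apply Types.FilteredColimit.isColimitOf
  · -- joint surjectivity
    intro u
    have hstage : ∀ j : Jp, ∃ (k : Jc) (v : F.obj j ⟶ E.obj k),
        v ≫ tc.ι.app k = t.ι.app j ≫ u := by
      intro j
      obtain ⟨k, v, hv⟩ := Types.jointly_surjective _ (hcol j) (t.ι.app j ≫ u)
      exact ⟨k, v, hv⟩
    choose k v hv using hstage
    obtain ⟨k₀, hk₀⟩ := hJc (Set.range k) (mk_range_le.trans_lt hJp)
    set w : ∀ j, F.obj j ⟶ E.obj k₀ :=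
      fun j => v j ≫ E.map (homOfLE (hk₀ _ ⟨j, rfl⟩)) with hwdef
    have hw : ∀ j, w j ≫ tc.ι.app k₀ = t.ι.app j ≫ u := fun j => by
      rw [hwdef]; dsimp only
      rw [Category.assoc, tc.w]
      exact hv j
    have hpair : ∀ p : {p : Jp × Jp // p.1 ≤ p.2}, ∃ (k' : Jc) (h : k₀ ≤ k'),
        F.map (homOfLE p.2) ≫ w p.1.2 ≫ E.map (homOfLE h) = w p.1.1 ≫ E.map (homOfLE h) := by
      rintro ⟨⟨j, j'⟩, hjj⟩
      have hEq : ((coyoneda.obj (op (F.obj j))).mapCocone tc).ι.app k₀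
            (F.map (homOfLE hjj) ≫ w j') =
          ((coyoneda.obj (op (F.obj j))).mapCocone tc).ι.app k₀ (w j) := by
        show (F.map (homOfLE hjj) ≫ w j') ≫ tc.ι.app k₀ = w j ≫ tc.ι.app k₀
        rw [Category.assoc, hw j', hw j, ← Category.assoc, t.w]
      obtain ⟨k', f, g, he⟩ := (Types.FilteredColimit.isColimit_eq_iff _ (hcol j)).1 hEq
      refine ⟨k', leOfHom f, ?_⟩
      have : (E ⋙ coyoneda.obj (op (F.obj j))).map f (F.map (homOfLE hjj) ≫ w j') =
          (E ⋙ coyoneda.obj (op (F.obj j))).map g (w j) := he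
      show F.map (homOfLE hjj) ≫ w j' ≫ E.map f = w j ≫ E.map (homOfLE (leOfHom f))
      rw [show homOfLE (leOfHom f) = g from hom_eq _ _]
      rw [← Category.assoc]
      exact this
    choose k' hk' he using hpair
    obtain ⟨k₁, hk₁⟩ := hJc (insert k₀ (Set.range k'))
      (mk_insert_le.trans_lt (add_lt_of_lt hlam.aleph0_le
        (mk_range_le.trans_lt hpairs) (one_lt_aleph0.trans_le hlam.aleph0_le)))
    have hk₀₁ : k₀ ≤ k₁ := hk₁ _ (Set.mem_insert _ _)
    set z : ∀ j, F.obj j ⟶ E.obj k₁ := fun j => w j ≫ E.map (homOfLE hk₀₁) with hzdef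
    have hznat : ∀ (j j' : Jp) (φ : j ⟶ j'), F.map φ ≫ z j' = z j := by
      intro j j' φ
      have h1 : k' ⟨(j, j'), leOfHom φ⟩ ≤ k₁ := hk₁ _ (Set.mem_insert_of_mem _ ⟨_, rfl⟩)
      have hep := eq_whisker (he ⟨(j, j'), leOfHom φ⟩) (E.map (homOfLE h1))
      calc F.map φ ≫ z j'
          = (F.map (homOfLE (leOfHom φ)) ≫ w j' ≫
              E.map (homOfLE (hk' ⟨(j, j'), leOfHom φ⟩))) ≫ E.map (homOfLE h1) := by
            rw [hzdef]; dsimp only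
            rw [map_trans E (hk' ⟨(j, j'), leOfHom φ⟩) h1 hk₀₁]
            simp only [Category.assoc]
            rfl
        _ = (w j ≫ E.map (homOfLE (hk' ⟨(j, j'), leOfHom φ⟩))) ≫ E.map (homOfLE h1) := hep
        _ = z j := by
            rw [hzdef]; dsimp only
            rw [map_trans E (hk' ⟨(j, j'), leOfHom φ⟩) h1 hk₀₁]
            simp only [Category.assoc]
    set s : Cocone F :=
      { pt := E.obj k₁
        ι := { app := z
               naturality := fun j j' φ => by
                 rw [hznat j j' φ]; exact (Category.comp_id _).symm } } with hsdef
    refine ⟨k₁, ht.desc s, ?_⟩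
    show u = ht.desc s ≫ tc.ι.app k₁
    refine ht.hom_ext fun j => ?_
    rw [← Category.assoc, ht.fac s j]
    show t.ι.app j ≫ u = z j ≫ tc.ι.app k₁
    rw [hzdef]; dsimp only
    rw [Category.assoc, tc.w]
    exact (hw j).symm
  · -- equalization
    intro k1 k2 x1 x2 hx
    replace hx : x1 ≫ tc.ι.app k1 = x2 ≫ tc.ι.app k2 := hx
    obtain ⟨k3, h13, h23⟩ := directed_of (· ≤ ·) k1 k2
    have hy : x1 ≫ E.map (homOfLE h13) ≫ tc.ι.app k3 =
        x2 ≫ E.map (homOfLE h23) ≫ tc.ι.app k3 := by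
      rw [tc.w, tc.w]
      exact hx
    have hj : ∀ j : Jp, ∃ (k' : Jc) (h : k3 ≤ k'),
        (t.ι.app j ≫ x1 ≫ E.map (homOfLE h13)) ≫ E.map (homOfLE h) =
        (t.ι.app j ≫ x2 ≫ E.map (homOfLE h23)) ≫ E.map (homOfLE h) := by
      intro j
      have hEq : ((coyoneda.obj (op (F.obj j))).mapCocone tc).ι.app k3
            (t.ι.app j ≫ x1 ≫ E.map (homOfLE h13)) =
          ((coyoneda.obj (op (F.obj j))).mapCocone tc).ι.app k3
            (t.ι.app j ≫ x2 ≫ E.map (homOfLE h23)) := by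
        show (t.ι.app j ≫ x1 ≫ E.map (homOfLE h13)) ≫ tc.ι.app k3 =
          (t.ι.app j ≫ x2 ≫ E.map (homOfLE h23)) ≫ tc.ι.app k3
        simp only [Category.assoc]
        rw [hy]
      obtain ⟨k', f, g, he⟩ := (Types.FilteredColimit.isColimit_eq_iff _ (hcol j)).1 hEq
      refine ⟨k', leOfHom f, ?_⟩
      have h2 : (t.ι.app j ≫ x1 ≫ E.map (homOfLE h13)) ≫ E.map f =
          (t.ι.app j ≫ x2 ≫ E.map (homOfLE h23)) ≫ E.map g := he
      rw [show homOfLE (leOfHom f) = f from hom_eq _ _, h2,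
        show g = f from hom_eq _ _]
    choose k' hk' he using hj
    obtain ⟨k4, hk4⟩ := hJc (insert k3 (Set.range k'))
      (mk_insert_le.trans_lt (add_lt_of_lt hlam.aleph0_le
        (mk_range_le.trans_lt hJp) (one_lt_aleph0.trans_le hlam.aleph0_le)))
    have h34 : k3 ≤ k4 := hk4 _ (Set.mem_insert _ _)
    have key : (x1 ≫ E.map (homOfLE h13)) ≫ E.map (homOfLE h34) =
        (x2 ≫ E.map (homOfLE h23)) ≫ E.map (homOfLE h34) := by
      refine ht.hom_ext fun j => ?_
      have h1 : k' j ≤ k4 := hk4 _ (Set.mem_insert_of_mem _ ⟨j, rfl⟩)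
      have hep := eq_whisker (he j) (E.map (homOfLE h1))
      rw [map_trans E (hk' j) h1 h34]
      simp only [Category.assoc] at hep ⊢
      exact hep
    refine ⟨k4, homOfLE (h13.trans h34), homOfLE (h23.trans h34), ?_⟩
    show x1 ≫ E.map (homOfLE (h13.trans h34)) = x2 ≫ E.map (homOfLE (h23.trans h34))
    rw [map_trans E h13 h34 (h13.trans h34), map_trans E h23 h34 (h23.trans h34),
      ← Category.assoc, ← Category.assoc]
    exact key

theorem isPresentable_of_small_colimit (lam : Cardinal.{u}) (hlam : lam.IsRegular)
    {Jp : Type u} [Preorder Jp] [Nonempty Jp] [IsDirected Jp (· ≤ ·)]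
    (hJp : Cardinal.mk Jp < lam) {F : Jp ⥤ C} (hF : ∀ j, IsPresentable lam (F.obj j))
    {t : Cocone F} (ht : IsColimit t) : IsPresentable lam t.pt := by
  intro Jc _ hJc
  exact ⟨⟨fun {E} => ⟨fun {tc} htc =>
    mapped_isColimit lam hlam hJp hF ht Jc hJc E tc htc⟩⟩⟩

end Pres

theorem isPresentable_mono {κ κ' : Cardinal.{u}} (h : κ ≤ κ') {C : Type u₂}
    [Category.{u} C] {X : C} (hp : IsPresentable κ X) : IsPresentable κ' X :=
  fun J _ hd => hp J (cardDirected_mono h hd)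

end Stmt15Aux



/-- Easy direction of Proposition 6.2: in a coherent accessible category with concrete directed
colimits whose morphisms are concrete monomorphisms (with AP, JEP and monster cardinals
available), every `λ`-saturated object is `λ`-Galois saturated: for every `g : M ⟶ K` with `M`
`λ`-presentable and every type `(f,a)` over `M` there is `b ∈ U(K)` with `(f,a)` equivalent to
`(g,b)`. -/
theorem stmt15 (C : Type u₂) [Category.{u} C] (κ : Cardinal.{u}) (hκ : κ.IsRegular)
    (hacc : IsAccessible κ C) (hdir : HasDirectedColimits C)
    (U : C ⥤ Type u) (hfaith : U.Faithful) (hU : PreservesDirectedColimits U)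
    (hcoh : Coherent U)
    (hmono : ∀ {A B : C} (f : A ⟶ B), Mono f ∧ Function.Injective (U.map f))
    (hamalg : AmalgamationProperty C) (hjep : JointEmbeddingProperty C)
    (hmonster : ∀ μ : Cardinal.{u}, ∃ ν : Cardinal.{u}, μ ≤ ν ∧ ν.IsRegular ∧
      Cardinal.powerlt ν ν = ν)
    (lam : Cardinal.{u}) (hlam : lam.IsRegular) (hbig : κ ≤ lam)
    (K : C) (hKsat : IsSaturated lam K) :
    ∀ (M : C), IsPresentable lam M → ∀ (g : M ⟶ K) (N : C) (f : M ⟶ N) (a : U.obj N),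
      ∃ b : U.obj K, TypesEquiv U f a g b := by
  intro M hM g N f a
  obtain ⟨S₀, hS₀, hpres⟩ := hacc.generators
  obtain ⟨P⟩ := hpres N
  have h1 : (Cardinal.aleph0 ≤ lam) := hlam.aleph0_le
  -- a colimit cocone over `P.D` with point `N`
  let c : Cocone P.D := { pt := N, ι := P.cocone.ι ≫ (Functor.const P.J).map P.iso.hom }
  have hc : IsColimit c := P.isColimit.ofIsoColimit (Cocones.ext P.iso (fun j => rfl))
  have hJ : IsCardDirected κ P.J := P.directed
  have hcsh : ∀ S : Set P.J, S.Nonempty → DirectedOn (· ≤ ·) S →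
      HasColimitsOfShape ↥S C :=
    fun S hn hd => hdir ↥S (Stmt15Aux.isCardDirected_aleph0_of_directedOn hn hd)
  have hJs : IsCardDirected lam (Stmt15Aux.DirSub lam P.J) :=
    Stmt15Aux.dirSub_directed hκ hlam hbig hJ
  -- the grand colimit cocone over the poset of small directed subsets
  let Ds := Stmt15Aux.DsFun P.D lam hcsh
  let Γ := Stmt15Aux.gammaCocone P.D lam hcsh c
  have hΓ : IsColimit Γ := Stmt15Aux.gammaIsColimit P.D hcsh c h1 hc
  -- factor `f` through a stage
  have hΓ' : IsColimit ((coyoneda.obj (op M)).mapCocone Γ) := by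
    haveI := (hM _ hJs).some
    exact isColimitOfPreserves _ hΓ
  obtain ⟨S₁, f₁, hf₁⟩ := Types.jointly_surjective _ hΓ' f
  have hf₁' : f₁ ≫ Γ.ι.app S₁ = f := hf₁
  -- lift `a` to a stage of the original presentation
  have hJ0 : IsCardDirected Cardinal.aleph0 P.J :=
    Stmt15Aux.cardDirected_mono hκ.aleph0_le hJ
  have hUc : IsColimit (U.mapCocone c) := by
    haveI := (hU P.J hJ0).some
    exact isColimitOfPreserves U hc
  obtain ⟨j, a', ha'⟩ := Types.jointly_surjective _ hUc a
  have ha'' : U.map (c.ι.app j) a' = a := ha'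
  let S₂ : Stmt15Aux.DirSub lam P.J := Stmt15Aux.sgl h1 j
  haveI := hcsh S₂.1 S₂.2.1 S₂.2.2.1
  let a₂ : U.obj (Ds.obj S₂) := U.map (Stmt15Aux.NSι P.D S₂.1 ⟨j, rfl⟩) a'
  have ha₂ : U.map (Γ.ι.app S₂) a₂ = a := by
    erw [← FunctorToTypes.map_comp_apply]
    erw [show Stmt15Aux.NSι P.D S₂.1 ⟨j, rfl⟩ ≫ Γ.ι.app S₂ = c.ι.app j from
      Stmt15Aux.NSι_desc P.D S₂.1 c ⟨j, rfl⟩]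
    exact ha''
  -- combine the two stages
  obtain ⟨S₃, hS₃⟩ := hJs {S₁, S₂}
    ((((Set.finite_singleton S₂).insert S₁).lt_aleph0).trans_le h1)
  have le₁ : S₁ ≤ S₃ := hS₃ S₁ (Set.mem_insert _ _)
  have le₂ : S₂ ≤ S₃ := hS₃ S₂ (Set.mem_insert_of_mem _ rfl)
  let f₃ : M ⟶ Ds.obj S₃ := f₁ ≫ Ds.map (homOfLE le₁)
  let a₃ : U.obj (Ds.obj S₃) := U.map (Ds.map (homOfLE le₂)) a₂
  have hf₃ : f₃ ≫ Γ.ι.app S₃ = f := by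
    show (f₁ ≫ Ds.map (homOfLE le₁)) ≫ Γ.ι.app S₃ = f
    rw [Category.assoc, Γ.w (homOfLE le₁)]
    exact hf₁'
  have ha₃ : U.map (Γ.ι.app S₃) a₃ = a := by
    show U.map (Γ.ι.app S₃) (U.map (Ds.map (homOfLE le₂)) a₂) = a
    rw [← FunctorToTypes.map_comp_apply, Γ.w (homOfLE le₂)]
    exact ha₂
  -- the stage is `lam`-presentable
  have hpres₃ : IsPresentable lam (Ds.obj S₃) := by
    haveI := hcsh S₃.1 S₃.2.1 S₃.2.2.1
    haveI : Nonempty ↥S₃.1 := S₃.2.1.to_subtype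
    haveI : IsDirected ↥S₃.1 (· ≤ ·) := by
      constructor
      rintro ⟨x, hx⟩ ⟨y, hy⟩
      obtain ⟨z, hz, h1', h2'⟩ := S₃.2.2.1 x hx y hy
      exact ⟨⟨z, hz⟩, h1', h2'⟩
    exact Stmt15Aux.isPresentable_of_small_colimit lam hlam S₃.2.2.2
      (fun s => Stmt15Aux.isPresentable_mono hbig (hS₀ _ (P.mem s.1)))
      (colimit.isColimit (Stmt15Aux.inclF S₃.1 ⋙ P.D))
  -- saturation and amalgamation
  obtain ⟨h, hh⟩ := hKsat hM hpres₃ g f₃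
  obtain ⟨Q, p, q, hpq⟩ := hamalg (Γ.ι.app S₃) h
  refine ⟨U.map h a₃, Q, p, q, ?_, ?_⟩
  · erw [← hf₃, Category.assoc, hpq, ← Category.assoc, hh]
  · erw [← ha₃, ← FunctorToTypes.map_comp_apply, hpq, FunctorToTypes.map_comp_apply]
end
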